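/- arXiv:2510.14034 — 6 statements merged into one kernel-verified Lean document; each statement's English description precedes it below -/
import Mathlib

section
/- Let τ > 0 and B ≥ 0 be real numbers, and let (a_k), (b_k), (γ_k) be sequences of nonnegative real numbers such that τ·γ_k < 1 for every k; set σ_k = (1 − τ·γ_k)^{-1}. Fix an integer n ≥ 1 and suppose that for every integer m with 0 ≤ m ≤ n one has a_m + τ·Σ_{k=0}^{m} b_k ≤ τ·Σ_{k=0}^{m} γ_k·a_k + B. Then a_n + τ·Σ_{k=0}^{n} b_k ≤ exp(τ·Σ_{k=0}^{n} γ_k·σ_k)·B. -/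
/-- Implicit discrete Gronwall inequality (Lemma 2.1). -/
theorem implicit_discrete_gronwall
    (τ B : ℝ) (hτ : 0 < τ) (hB : 0 ≤ B)
    (a b γ : ℕ → ℝ)
    (ha : ∀ k, 0 ≤ a k) (hb : ∀ k, 0 ≤ b k) (hγ : ∀ k, 0 ≤ γ k)
    (hτγ : ∀ k, τ * γ k < 1)
    (n : ℕ) (hn : 1 ≤ n)
    (h : ∀ m ≤ n, a m + τ * ∑ k ∈ Finset.range (m + 1), b k ≤
        τ * (∑ k ∈ Finset.range (m + 1), γ k * a k) + B) :
    a n + τ * ∑ k ∈ Finset.range (n + 1), b k ≤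
      Real.exp (τ * ∑ k ∈ Finset.range (n + 1), γ k * (1 - τ * γ k)⁻¹) * B := by
  set E : ℕ → ℝ := fun m => a m + τ * ∑ k ∈ Finset.range (m + 1), b k with hE
  have hEnn : ∀ m, 0 ≤ E m := fun m =>
    add_nonneg (ha m) (mul_nonneg hτ.le (Finset.sum_nonneg fun k _ => hb k))
  set C : ℕ → ℝ := fun m => τ * ∑ k ∈ Finset.range m, γ k * E k + B with hC
  have hCnn : ∀ m, 0 ≤ C m := fun m =>
    add_nonneg (mul_nonneg hτ.le (Finset.sum_nonneg fun k _ =>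
      mul_nonneg (hγ k) (hEnn k))) hB
  have hpos : ∀ k, 0 < 1 - τ * γ k := fun k => by linarith [hτγ k]
  have hσnn : ∀ k, 0 ≤ τ * γ k * (1 - τ * γ k)⁻¹ := fun k =>
    mul_nonneg (mul_nonneg hτ.le (hγ k)) (inv_nonneg.2 (hpos k).le)
  have key : ∀ m, m ≤ n → E m ≤ (1 - τ * γ m)⁻¹ * C m := by
    intro m hm
    have h1 : E m ≤ τ * ∑ k ∈ Finset.range (m + 1), γ k * a k + B := h m hm
    have h2 : ∑ k ∈ Finset.range (m + 1), γ k * a k ≤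
        ∑ k ∈ Finset.range (m + 1), γ k * E k := by
      apply Finset.sum_le_sum; intro k _
      exact mul_le_mul_of_nonneg_left
        (le_add_of_nonneg_right (mul_nonneg hτ.le (Finset.sum_nonneg fun j _ => hb j)))
        (hγ k)
    have h3 : E m ≤ C m + τ * (γ m * E m) := by
      have h2' : τ * ∑ k ∈ Finset.range (m + 1), γ k * a k + B ≤
          τ * ∑ k ∈ Finset.range (m + 1), γ k * E k + B := by
        linarith [mul_le_mul_of_nonneg_left h2 hτ.le]
      have h3' := le_trans h1 h2'
      rw [Finset.sum_range_succ] at h3'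
      simp only [hC]
      linarith [h3', mul_add τ (∑ k ∈ Finset.range m, γ k * E k) (γ m * E m)]
    rw [le_inv_mul_iff₀ (hpos m)]
    nlinarith [h3]
  have prodbound : ∀ m, m ≤ n → C m ≤
      (∏ k ∈ Finset.range m, (1 + τ * γ k * (1 - τ * γ k)⁻¹)) * B := by
    intro m hm
    induction m with
    | zero => simp [hC]
    | succ m ih =>
      have hm' : m ≤ n := Nat.le_of_succ_le hm
      have ihm := ih hm'
      have hEm := key m hm'
      have hCm1 : C (m + 1) = C m + τ * (γ m * E m) := by
        simp only [hC, Finset.sum_range_succ]; ring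
      have h4 : C (m + 1) ≤ (1 + τ * γ m * (1 - τ * γ m)⁻¹) * C m := by
        rw [hCm1]
        have : τ * (γ m * E m) ≤ τ * γ m * ((1 - τ * γ m)⁻¹ * C m) := by
          have := mul_le_mul_of_nonneg_left hEm (mul_nonneg hτ.le (hγ m))
          nlinarith [this]
        nlinarith [this]
      calc C (m + 1) ≤ (1 + τ * γ m * (1 - τ * γ m)⁻¹) * C m := h4
        _ ≤ (1 + τ * γ m * (1 - τ * γ m)⁻¹) *
            ((∏ k ∈ Finset.range m, (1 + τ * γ k * (1 - τ * γ k)⁻¹)) * B) := by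
          apply mul_le_mul_of_nonneg_left ihm (by linarith [hσnn m])
        _ = (∏ k ∈ Finset.range (m + 1), (1 + τ * γ k * (1 - τ * γ k)⁻¹)) * B := by
          rw [Finset.prod_range_succ]; ring
  -- E n ≤ σ_n * C n, and σ_n = 1 + τγ_n σ_n
  have hσeq : (1 - τ * γ n)⁻¹ = 1 + τ * γ n * (1 - τ * γ n)⁻¹ := by
    field_simp [(hpos n).ne']; ring
  have hfin : E n ≤ (∏ k ∈ Finset.range (n + 1), (1 + τ * γ k * (1 - τ * γ k)⁻¹)) * B := by
    calc E n ≤ (1 - τ * γ n)⁻¹ * C n := key n le_rfl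
      _ = (1 + τ * γ n * (1 - τ * γ n)⁻¹) * C n := by rw [← hσeq]
      _ ≤ (1 + τ * γ n * (1 - τ * γ n)⁻¹) *
          ((∏ k ∈ Finset.range n, (1 + τ * γ k * (1 - τ * γ k)⁻¹)) * B) := by
        apply mul_le_mul_of_nonneg_left (prodbound n le_rfl) (by linarith [hσnn n])
      _ = (∏ k ∈ Finset.range (n + 1), (1 + τ * γ k * (1 - τ * γ k)⁻¹)) * B := by
        rw [Finset.prod_range_succ]; ring
  have hprodexp : (∏ k ∈ Finset.range (n + 1), (1 + τ * γ k * (1 - τ * γ k)⁻¹)) ≤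
      Real.exp (τ * ∑ k ∈ Finset.range (n + 1), γ k * (1 - τ * γ k)⁻¹) := by
    have : τ * ∑ k ∈ Finset.range (n + 1), γ k * (1 - τ * γ k)⁻¹ =
        ∑ k ∈ Finset.range (n + 1), τ * γ k * (1 - τ * γ k)⁻¹ := by
      rw [Finset.mul_sum]; congr 1; ext k; ring
    rw [this, Real.exp_sum]
    apply Finset.prod_le_prod
    · intro k _; linarith [hσnn k]
    · intro k _; linarith [Real.add_one_le_exp (τ * γ k * (1 - τ * γ k)⁻¹)]
  calc a n + τ * ∑ k ∈ Finset.range (n + 1), b k = E n := rfl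
    _ ≤ (∏ k ∈ Finset.range (n + 1), (1 + τ * γ k * (1 - τ * γ k)⁻¹)) * B := hfin
    _ ≤ Real.exp (τ * ∑ k ∈ Finset.range (n + 1), γ k * (1 - τ * γ k)⁻¹) * B :=
      mul_le_mul_of_nonneg_right hprodexp hB
end

section
/- Let E be a real Banach space, let t ∈ ℝ and τ > 0, and let f : ℝ → E be three times continuously differentiable on the interval [t − τ, t + τ]. Then ‖f'(t) − (f(t+τ) − f(t−τ))/(2τ)‖² ≤ (τ³/40)·∫_{t−τ}^{t+τ} ‖f'''(s)‖² ds. -/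
open MeasureTheory intervalIntegral Set

lemma cs_integral {a b : ℝ} (hab : a ≤ b) {g h : ℝ → ℝ}
    (hg : ContinuousOn g (Set.Icc a b)) (hh : ContinuousOn h (Set.Icc a b)) :
    (∫ s in a..b, g s * h s) ^ 2 ≤ (∫ s in a..b, g s ^ 2) * (∫ s in a..b, h s ^ 2) := by
  have hu : Set.uIcc a b = Set.Icc a b := Set.uIcc_of_le hab
  have ig2 : IntervalIntegrable (fun s => g s ^ 2) volume a b :=
    ((hg.pow 2).mono hu.subset).intervalIntegrable
  have ih2 : IntervalIntegrable (fun s => h s ^ 2) volume a b :=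
    ((hh.pow 2).mono hu.subset).intervalIntegrable
  have igh : IntervalIntegrable (fun s => g s * h s) volume a b :=
    ((hg.mul hh).mono hu.subset).intervalIntegrable
  set A := ∫ s in a..b, g s ^ 2 with hA
  set B := ∫ s in a..b, g s * h s with hB
  set C := ∫ s in a..b, h s ^ 2 with hC
  have quad : ∀ x : ℝ, 0 ≤ A * (x * x) + (2 * B) * x + C := by
    intro x
    have expand : A * (x * x) + (2 * B) * x + C = ∫ s in a..b, (x * g s + h s) ^ 2 := by
      have : (∫ s in a..b, (x * g s + h s) ^ 2)
          = ∫ s in a..b, ((x * x) * g s ^ 2 + (2 * x) * (g s * h s) + h s ^ 2) := by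
        congr 1; funext s; ring
      rw [this, intervalIntegral.integral_add ((ig2.const_mul _).add (igh.const_mul _)) ih2,
        intervalIntegral.integral_add (ig2.const_mul _) (igh.const_mul _),
        intervalIntegral.integral_const_mul, intervalIntegral.integral_const_mul]
      ring
    rw [expand]
    exact intervalIntegral.integral_nonneg hab fun s _ => sq_nonneg _
  have hd := discrim_le_zero quad
  rw [discrim] at hd
  nlinarith [hd]

lemma taylor_step {E : Type*} [NormedAddCommGroup E] [NormedSpace ℝ E] [CompleteSpace E]
    {a b : ℝ} (f f1 f2 f3 : ℝ → E)
    (hf : ∀ s ∈ Set.Icc a b, HasDerivWithinAt f (f1 s) (Set.Icc a b) s)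
    (hf1 : ∀ s ∈ Set.Icc a b, HasDerivWithinAt f1 (f2 s) (Set.Icc a b) s)
    (hf2 : ∀ s ∈ Set.Icc a b, HasDerivWithinAt f2 (f3 s) (Set.Icc a b) s)
    (hf3 : ContinuousOn f3 (Set.Icc a b))
    {t x : ℝ} (ht : t ∈ Set.Icc a b) (hx : x ∈ Set.Icc a b) :
    f x = f t + (x - t) • f1 t + ((x - t) ^ 2 / 2) • f2 t
      + ∫ s in t..x, ((x - s) ^ 2 / 2) • f3 s := by
  set I := Set.Icc a b
  set F : ℝ → E := fun s => f s + (x - s) • f1 s + ((x - s) ^ 2 / 2) • f2 s with hFdef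
  have hF : ∀ s ∈ I, HasDerivWithinAt F (((x - s) ^ 2 / 2) • f3 s) I s := by
    intro s hs
    have d1 : HasDerivWithinAt (fun u : ℝ => x - u) (-1) I s := by
      simpa using (hasDerivWithinAt_id s I).const_sub x
    have d2 : HasDerivWithinAt (fun u : ℝ => (x - u) ^ 2 / 2) (-(x - s)) I s := by
      have := (d1.pow 2).div_const 2
      refine this.congr_deriv ?_
      push_cast
      ring
    have B := d1.smul (hf1 s hs)
    have C := d2.smul (hf2 s hs)
    have total := ((hf s hs).add B).add C
    refine total.congr_deriv ?_
    module
  have hsub : Set.uIcc t x ⊆ I := Set.uIcc_subset_Icc ht hx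
  have hcI : ContinuousOn F I := fun s hs => (hF s hs).continuousWithinAt
  have hcont : ContinuousOn F (Set.uIcc t x) := hcI.mono hsub
  have hderiv : ∀ s ∈ Set.Ioo (min t x) (max t x),
      HasDerivWithinAt F (((x - s) ^ 2 / 2) • f3 s) (Set.Ioi s) s := by
    intro s hs
    have hsI : s ∈ Set.Ioo a b := by
      constructor
      · exact lt_of_le_of_lt (le_min ht.1 hx.1) hs.1
      · exact lt_of_lt_of_le hs.2 (max_le ht.2 hx.2)
    have hnhds : I ∈ nhds s := Icc_mem_nhds hsI.1 hsI.2
    exact ((hF s (Set.Ioo_subset_Icc_self hsI)).hasDerivAt hnhds).hasDerivWithinAt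
  have hint : IntervalIntegrable (fun s => ((x - s) ^ 2 / 2) • f3 s) volume t x :=
    (((continuous_const.sub continuous_id).pow 2).div_const 2).continuousOn.smul
      (hf3.mono hsub) |>.intervalIntegrable
  have key := intervalIntegral.integral_eq_sub_of_hasDeriv_right hcont hderiv hint
  have hFx : F x = f x := by simp [hFdef]
  have hFt : F t = f t + (x - t) • f1 t + ((x - t) ^ 2 / 2) • f2 t := rfl
  rw [key, hFx, hFt]
  abel


/-- Single-step consistency estimate for the centered (leap-frog) difference quotient:
`‖f'(t) - (f(t+τ) - f(t-τ))/(2τ)‖² ≤ (τ³/40) ∫_{t-τ}^{t+τ} ‖f'''(s)‖² ds`. -/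
theorem centered_difference_consistency
    {E : Type*} [NormedAddCommGroup E] [NormedSpace ℝ E] [CompleteSpace E]
    (t τ : ℝ) (hτ : 0 < τ) (f f1 f2 f3 : ℝ → E)
    (hf : ∀ s ∈ Set.Icc (t - τ) (t + τ),
      HasDerivWithinAt f (f1 s) (Set.Icc (t - τ) (t + τ)) s)
    (hf1 : ∀ s ∈ Set.Icc (t - τ) (t + τ),
      HasDerivWithinAt f1 (f2 s) (Set.Icc (t - τ) (t + τ)) s)
    (hf2 : ∀ s ∈ Set.Icc (t - τ) (t + τ),
      HasDerivWithinAt f2 (f3 s) (Set.Icc (t - τ) (t + τ)) s)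
    (hf3 : ContinuousOn f3 (Set.Icc (t - τ) (t + τ))) :
    ‖f1 t - (2 * τ)⁻¹ • (f (t + τ) - f (t - τ))‖ ^ 2 ≤
      τ ^ 3 / 40 * ∫ s in (t - τ)..(t + τ), ‖f3 s‖ ^ 2 := by
  have ht : t ∈ Set.Icc (t - τ) (t + τ) := by constructor <;> linarith
  have htp : t + τ ∈ Set.Icc (t - τ) (t + τ) := by constructor <;> linarith
  have htm : t - τ ∈ Set.Icc (t - τ) (t + τ) := by constructor <;> linarith
  set Rp := ∫ s in t..(t + τ), (((t + τ) - s) ^ 2 / 2) • f3 s with hRpdef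
  set A' := ∫ s in (t - τ)..t, ((s - (t - τ)) ^ 2 / 2) • f3 s with hA'def
  -- Taylor expansions
  have hp := taylor_step f f1 f2 f3 hf hf1 hf2 hf3 ht htp
  have hm := taylor_step f f1 f2 f3 hf hf1 hf2 hf3 ht htm
  have hcoefp : t + τ - t = τ := by ring
  have hcoefm : t - τ - t = -τ := by ring
  rw [hcoefp] at hp
  rw [hcoefm] at hm
  have hRm : (∫ s in t..(t - τ), ((t - τ - s) ^ 2 / 2) • f3 s) = -A' := by
    rw [intervalIntegral.integral_symm]
    congr 1
    apply intervalIntegral.integral_congr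
    intro s _
    congr 1
    ring
  rw [hRm] at hm
  -- key identity
  have h2τ : (2 * τ)⁻¹ * (2 * τ) = 1 := inv_mul_cancel₀ (by positivity)
  have hdiff : f (t + τ) - f (t - τ) = (2 * τ) • f1 t + (Rp + A') := by
    rw [hp, hm]; module
  have hkey : f1 t - (2 * τ)⁻¹ • (f (t + τ) - f (t - τ))
      = -((2 * τ)⁻¹ • (Rp + A')) := by
    rw [hdiff, smul_add, smul_smul, h2τ, one_smul]; abel
  -- integrals of |f3|^2
  set P := ∫ s in t..(t + τ), ‖f3 s‖ ^ 2 with hPdef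
  set M := ∫ s in (t - τ)..t, ‖f3 s‖ ^ 2 with hMdef
  have hsub1 : Set.Icc t (t + τ) ⊆ Set.Icc (t - τ) (t + τ) :=
    Set.Icc_subset_Icc (by linarith) le_rfl
  have hsub2 : Set.Icc (t - τ) t ⊆ Set.Icc (t - τ) (t + τ) :=
    Set.Icc_subset_Icc le_rfl (by linarith)
  have hn1 : ContinuousOn (fun s => ‖f3 s‖) (Set.Icc t (t + τ)) := (hf3.mono hsub1).norm
  have hn2 : ContinuousOn (fun s => ‖f3 s‖) (Set.Icc (t - τ) t) := (hf3.mono hsub2).norm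
  have hT : M + P = ∫ s in (t - τ)..(t + τ), ‖f3 s‖ ^ 2 := by
    apply intervalIntegral.integral_add_adjacent_intervals
    · exact ((hn2.pow 2).mono (by rw [Set.uIcc_of_le (by linarith : t - τ ≤ t)]
        )).intervalIntegrable
    · exact ((hn1.pow 2).mono (by rw [Set.uIcc_of_le (by linarith : t ≤ t + τ)]
        )).intervalIntegrable
  have hPnn : 0 ≤ P := intervalIntegral.integral_nonneg (by linarith) fun s _ => sq_nonneg _
  have hMnn : 0 ≤ M := intervalIntegral.integral_nonneg (by linarith) fun s _ => sq_nonneg _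
  -- polynomial weight integrals
  have haux : ∫ u in (0:ℝ)..τ, u ^ 4 / 4 = τ ^ 5 / 20 := by
    rw [intervalIntegral.integral_div, integral_pow]
    norm_num [div_div]
  have hIp : (∫ s in t..(t + τ), (((t + τ) - s) ^ 2 / 2) ^ 2) = τ ^ 5 / 20 := by
    have e : ∀ s : ℝ, (((t + τ) - s) ^ 2 / 2) ^ 2 = ((t + τ) - s) ^ 4 / 4 := fun s => by ring
    simp_rw [e]
    have := intervalIntegral.integral_comp_sub_left (a := t) (b := t + τ)
      (fun u => u ^ 4 / 4) (t + τ)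
    simp only [add_sub_cancel_left, sub_self, add_sub_cancel_right] at this
    rw [this, haux]
  have hIm : (∫ s in (t - τ)..t, ((s - (t - τ)) ^ 2 / 2) ^ 2) = τ ^ 5 / 20 := by
    have e : ∀ s : ℝ, ((s - (t - τ)) ^ 2 / 2) ^ 2 = (s - (t - τ)) ^ 4 / 4 := fun s => by ring
    simp_rw [e]
    have := intervalIntegral.integral_comp_sub_right (a := t - τ) (b := t)
      (fun u => u ^ 4 / 4) (t - τ)
    simp only [sub_self, sub_sub_cancel] at this
    rw [this]
    exact haux
  -- Cauchy–Schwarz bounds on each piece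
  set sc := Real.sqrt (τ ^ 5 / 20) with hscdef
  set sp := Real.sqrt P with hspdef
  set sm := Real.sqrt M with hsmdef
  have hgcont1 : ContinuousOn (fun s : ℝ => ((t + τ) - s) ^ 2 / 2) (Set.Icc t (t + τ)) := by
    fun_prop
  have hgcont2 : ContinuousOn (fun s : ℝ => (s - (t - τ)) ^ 2 / 2) (Set.Icc (t - τ) t) := by
    fun_prop
  have piece : ∀ (a b : ℝ) (hab : a ≤ b) (g : ℝ → ℝ), (∀ s, 0 ≤ g s) →
      ContinuousOn g (Set.Icc a b) → ContinuousOn (fun s => ‖f3 s‖) (Set.Icc a b) →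
      ‖∫ s in a..b, g s • f3 s‖ ≤
        Real.sqrt (∫ s in a..b, g s ^ 2) * Real.sqrt (∫ s in a..b, ‖f3 s‖ ^ 2) := by
    intro a b hab g hg0 hgc hnc
    have step1 : ‖∫ s in a..b, g s • f3 s‖ ≤ ∫ s in a..b, g s * ‖f3 s‖ := by
      have := intervalIntegral.norm_integral_le_integral_norm
        (μ := volume) (f := fun s => g s • f3 s) hab
      have e : ∀ s, ‖g s • f3 s‖ = g s * ‖f3 s‖ := by
        intro s
        rw [norm_smul, Real.norm_eq_abs, abs_of_nonneg (hg0 s)]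
      simpa [e] using this
    have hcs := cs_integral hab hgc hnc
    have hBnn : 0 ≤ ∫ s in a..b, g s * ‖f3 s‖ :=
      intervalIntegral.integral_nonneg hab fun s _ => mul_nonneg (hg0 s) (norm_nonneg _)
    have hAnn : 0 ≤ ∫ s in a..b, g s ^ 2 :=
      intervalIntegral.integral_nonneg hab fun s _ => sq_nonneg _
    have step2 : (∫ s in a..b, g s * ‖f3 s‖) ≤
        Real.sqrt (∫ s in a..b, g s ^ 2) * Real.sqrt (∫ s in a..b, ‖f3 s‖ ^ 2) := by
      rw [← Real.sqrt_mul hAnn]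
      calc (∫ s in a..b, g s * ‖f3 s‖)
          = Real.sqrt ((∫ s in a..b, g s * ‖f3 s‖) ^ 2) := (Real.sqrt_sq hBnn).symm
        _ ≤ _ := Real.sqrt_le_sqrt hcs
    exact le_trans step1 step2
  have h1 : ‖Rp‖ ≤ sc * sp := by
    have := piece t (t + τ) (by linarith) _ (fun s => by positivity) hgcont1 hn1
    rwa [hIp] at this
  have h2 : ‖A'‖ ≤ sc * sm := by
    have := piece (t - τ) t (by linarith) _ (fun s => by positivity) hgcont2 hn2
    rwa [hIm] at this
  -- final arithmetic
  rw [hkey, norm_neg, norm_smul, Real.norm_eq_abs, abs_of_pos (by positivity), ← hT]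
  set N := ‖Rp + A'‖ with hNdef
  have hNnn : 0 ≤ N := norm_nonneg _
  have hN : N ≤ sc * sp + sc * sm := le_trans (norm_add_le _ _) (add_le_add h1 h2)
  have hNsq : N ^ 2 ≤ (sc * sp + sc * sm) ^ 2 := by
    exact pow_le_pow_left₀ hNnn hN 2
  have hsc2 : sc ^ 2 = τ ^ 5 / 20 := Real.sq_sqrt (by positivity)
  have hsp2 : sp ^ 2 = P := Real.sq_sqrt hPnn
  have hsm2 : sm ^ 2 = M := Real.sq_sqrt hMnn
  have inner : sp ^ 2 + sm ^ 2 + 2 * (sp * sm) ≤ 2 * (M + P) := by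
    nlinarith [sq_nonneg (sp - sm), hsp2, hsm2]
  have key2 : N ^ 2 ≤ τ ^ 5 / 10 * (M + P) := by
    calc N ^ 2 ≤ (sc * sp + sc * sm) ^ 2 := hNsq
      _ = sc ^ 2 * (sp ^ 2 + sm ^ 2 + 2 * (sp * sm)) := by ring
      _ = τ ^ 5 / 20 * (sp ^ 2 + sm ^ 2 + 2 * (sp * sm)) := by rw [hsc2]
      _ ≤ τ ^ 5 / 20 * (2 * (M + P)) :=
          mul_le_mul_of_nonneg_left inner (by positivity)
      _ = τ ^ 5 / 10 * (M + P) := by ring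
  have hτ4 : (0:ℝ) < 4 * τ ^ 2 := by positivity
  clear_value Rp A' P M sc sp sm N
  calc ((2 * τ)⁻¹ * N) ^ 2 = N ^ 2 / (4 * τ ^ 2) := by
        rw [mul_pow, inv_pow, div_eq_inv_mul]
        congr 2
        ring
    _ ≤ (τ ^ 5 / 10 * (M + P)) / (4 * τ ^ 2) := by gcongr
    _ = τ ^ 3 / 40 * (M + P) := by
        rw [div_eq_iff (ne_of_gt hτ4)]
        ring
end

section
/- Let E be a real Banach space, let T > 0, let N ≥ 2 be an integer, set τ = T/N and t_n = n·τ for 0 ≤ n ≤ N, and let f : ℝ → E be three times continuously differentiable on [0, T]. Then τ·Σ_{n=1}^{N−1} ‖f'(t_n) − (f(t_{n+1}) − f(t_{n−1}))/(2τ)‖² ≤ (τ⁴/20)·∫_{0}^{T} ‖f'''(s)‖² ds. -/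
open MeasureTheory Set intervalIntegral

lemma ftc_icc {E : Type*} [NormedAddCommGroup E] [NormedSpace ℝ E] [CompleteSpace E]
    {T : ℝ} {g g' : ℝ → E}
    (hg : ∀ s ∈ Set.Icc (0:ℝ) T, HasDerivWithinAt g (g' s) (Set.Icc (0:ℝ) T) s)
    (hg' : ContinuousOn g' (Set.Icc (0:ℝ) T))
    {x y : ℝ} (hx : x ∈ Set.Icc (0:ℝ) T) (hy : y ∈ Set.Icc (0:ℝ) T) :
    ∫ s in x..y, g' s = g y - g x := by
  have hsub : Set.uIcc x y ⊆ Set.Icc (0:ℝ) T := Set.uIcc_subset_Icc hx hy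
  have hcont : ContinuousOn g (Set.uIcc x y) :=
    ContinuousOn.mono (fun s hs => (hg s hs).continuousWithinAt) hsub
  have hioo : Set.Ioo (min x y) (max x y) ⊆ Set.Ioo (0:ℝ) T := by
    intro s hs
    constructor
    · exact lt_of_le_of_lt (le_min hx.1 hy.1) hs.1
    · exact lt_of_lt_of_le hs.2 (max_le hx.2 hy.2)
  refine integral_eq_sub_of_hasDeriv_right hcont (fun s hs => ?_) ?_
  · have hs' : s ∈ Set.Ioo (0:ℝ) T := hioo hs
    have : HasDerivAt g (g' s) s := by
      have := hg s (Set.Ioo_subset_Icc_self hs')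
      exact this.hasDerivAt (Icc_mem_nhds hs'.1 hs'.2)
    exact this.hasDerivWithinAt
  · exact (hg'.mono hsub).intervalIntegrable

lemma poly_int_b (a b : ℝ) : (∫ s in a..b, ((b-s)^2/2)^2) = (b-a)^5/20 := by
  have key : ∀ s : ℝ, HasDerivAt (fun t => -((b-t)^5/20)) (((b-s)^2/2)^2) s := by
    intro s
    have h0 : HasDerivAt (fun t : ℝ => b - t) (-1) s := (hasDerivAt_id s).const_sub b
    have h1 := ((h0.pow 5).div_const 20).neg
    refine h1.congr_deriv ?_
    norm_num
    ring
  rw [integral_eq_sub_of_hasDerivAt (fun s _ => key s)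
    (Continuous.intervalIntegrable (by fun_prop) a b)]
  ring

lemma poly_int_a (a b : ℝ) : (∫ s in a..b, ((a-s)^2/2)^2) = (b-a)^5/20 := by
  have key : ∀ s : ℝ, HasDerivAt (fun t => (t-a)^5/20) (((a-s)^2/2)^2) s := by
    intro s
    have h0 : HasDerivAt (fun t : ℝ => t - a) (1) s := (hasDerivAt_id s).sub_const a
    have h1 := (h0.pow 5).div_const 20
    refine h1.congr_deriv ?_
    norm_num
    ring
  rw [integral_eq_sub_of_hasDerivAt (fun s _ => key s)
    (Continuous.intervalIntegrable (by fun_prop) a b)]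
  ring

lemma cs_interval {a b : ℝ} (hab : a ≤ b) {u v : ℝ → ℝ}
    (hu : ContinuousOn u (Set.Icc a b)) (hv : ContinuousOn v (Set.Icc a b))
    (hu0 : ∀ s ∈ Set.Icc a b, 0 ≤ u s) (hv0 : ∀ s ∈ Set.Icc a b, 0 ≤ v s)
    (hA : 0 < ∫ s in a..b, u s ^ 2) :
    (∫ s in a..b, u s * v s) ≤
      Real.sqrt (∫ s in a..b, u s ^ 2) * Real.sqrt (∫ s in a..b, v s ^ 2) := by
  set A := ∫ s in a..b, u s ^ 2 with hAdef
  set B := ∫ s in a..b, v s ^ 2 with hBdef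
  have hiu : IntervalIntegrable (fun s => u s ^ 2) volume a b :=
    ((hu.pow 2).mono (by rw [Set.uIcc_of_le hab])).intervalIntegrable
  have hiv : IntervalIntegrable (fun s => v s ^ 2) volume a b :=
    ((hv.pow 2).mono (by rw [Set.uIcc_of_le hab])).intervalIntegrable
  have hiuv : IntervalIntegrable (fun s => u s * v s) volume a b :=
    ((hu.mul hv).mono (by rw [Set.uIcc_of_le hab])).intervalIntegrable
  have hB : 0 ≤ B := by
    apply intervalIntegral.integral_nonneg hab
    intro s _; positivity
  have key : ∀ ε : ℝ, 0 < ε → (∫ s in a..b, u s * v s) ≤ ε/2 * A + 1/(2*ε) * B := by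
    intro ε hε
    have hpt : ∀ s ∈ Set.Icc a b, u s * v s ≤ ε/2 * u s ^ 2 + 1/(2*ε) * v s ^ 2 := by
      intro s hs
      have h2 : u s * v s ≤ (ε^2 * u s ^2 + v s ^2)/(2*ε) := by
        rw [le_div_iff₀ (by positivity)]
        nlinarith [sq_nonneg (ε * u s - v s)]
      calc u s * v s ≤ (ε^2 * u s ^2 + v s ^2)/(2*ε) := h2
        _ = ε/2 * u s ^ 2 + 1/(2*ε) * v s ^ 2 := by field_simp
    calc (∫ s in a..b, u s * v s)
        ≤ ∫ s in a..b, (ε/2 * u s ^ 2 + 1/(2*ε) * v s ^ 2) := by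
          apply intervalIntegral.integral_mono_on hab hiuv
          · exact ((hiu.const_mul (ε/2)).add (hiv.const_mul (1/(2*ε))))
          · exact hpt
      _ = ε/2 * A + 1/(2*ε) * B := by
          rw [intervalIntegral.integral_add (hiu.const_mul (ε/2)) (hiv.const_mul (1/(2*ε))),
            intervalIntegral.integral_const_mul, intervalIntegral.integral_const_mul]
  rcases eq_or_lt_of_le hB with hB0 | hBpos
  · rw [← hB0, Real.sqrt_zero, mul_zero]
    by_contra h
    push_neg at h
    set x := ∫ s in a..b, u s * v s
    have hx : 0 < x := h
    have := key (x / A) (by positivity)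
    rw [← hB0] at this
    rw [mul_zero, add_zero] at this
    have heq : x / A / 2 * A = x / 2 := by field_simp
    rw [heq] at this
    linarith
  · set sA := Real.sqrt A with hsA
    set sB := Real.sqrt B with hsB
    have hsA2 : sA ^ 2 = A := Real.sq_sqrt hA.le
    have hsB2 : sB ^ 2 = B := Real.sq_sqrt hBpos.le
    have hsApos : 0 < sA := Real.sqrt_pos.mpr hA
    have hsBpos : 0 < sB := Real.sqrt_pos.mpr hBpos
    have := key (sB / sA) (by positivity)
    calc (∫ s in a..b, u s * v s) ≤ (sB/sA)/2 * A + 1/(2*(sB/sA)) * B := this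
      _ = sA * sB := by
          rw [← hsA2, ← hsB2]
          field_simp
          ring

lemma taylor_two {E : Type*} [NormedAddCommGroup E] [NormedSpace ℝ E] [CompleteSpace E]
    {T : ℝ} {f f1 f2 f3 : ℝ → E}
    (hf : ∀ s ∈ Set.Icc (0 : ℝ) T, HasDerivWithinAt f (f1 s) (Set.Icc (0 : ℝ) T) s)
    (hf1 : ∀ s ∈ Set.Icc (0 : ℝ) T, HasDerivWithinAt f1 (f2 s) (Set.Icc (0 : ℝ) T) s)
    (hf2 : ∀ s ∈ Set.Icc (0 : ℝ) T, HasDerivWithinAt f2 (f3 s) (Set.Icc (0 : ℝ) T) s)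
    (hf3 : ContinuousOn f3 (Set.Icc (0 : ℝ) T))
    {a b : ℝ} (ha : a ∈ Set.Icc (0:ℝ) T) (hb : b ∈ Set.Icc (0:ℝ) T) :
    f b = f a + (b - a) • f1 a + ((b - a)^2/2) • f2 a
      + ∫ s in a..b, ((b - s)^2/2) • f3 s := by
  set g : ℝ → E := fun s => f s + (b - s) • f1 s + ((b - s)^2/2) • f2 s with hg
  have hgd : ∀ s ∈ Set.Icc (0:ℝ) T,
      HasDerivWithinAt g (((b - s)^2/2) • f3 s) (Set.Icc (0:ℝ) T) s := by
    intro s hs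
    have h0 : HasDerivWithinAt (fun t : ℝ => b - t) (-1) (Set.Icc (0:ℝ) T) s :=
      (hasDerivWithinAt_id s _).const_sub b
    have h1 : HasDerivWithinAt (fun t : ℝ => (b - t)^2/2) (-(b - s)) (Set.Icc (0:ℝ) T) s := by
      have := (h0.pow 2).div_const 2
      refine this.congr_deriv ?_
      norm_num
      ring
    have hD := ((hf s hs).add (h0.smul (hf1 s hs))).add (h1.smul (hf2 s hs))
    refine hD.congr_deriv ?_
    module
  have key := ftc_icc hgd (by fun_prop) ha hb
  have hga : g a = f a + (b - a) • f1 a + ((b - a)^2/2) • f2 a := rfl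
  have hgb : g b = f b := by simp [hg]
  rw [hgb, hga] at key
  rw [key]
  abel

lemma per_step {E : Type*} [NormedAddCommGroup E] [NormedSpace ℝ E] [CompleteSpace E]
    {T : ℝ} {f f1 f2 f3 : ℝ → E}
    (hf : ∀ s ∈ Set.Icc (0 : ℝ) T, HasDerivWithinAt f (f1 s) (Set.Icc (0 : ℝ) T) s)
    (hf1 : ∀ s ∈ Set.Icc (0 : ℝ) T, HasDerivWithinAt f1 (f2 s) (Set.Icc (0 : ℝ) T) s)
    (hf2 : ∀ s ∈ Set.Icc (0 : ℝ) T, HasDerivWithinAt f2 (f3 s) (Set.Icc (0 : ℝ) T) s)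
    (hf3 : ContinuousOn f3 (Set.Icc (0 : ℝ) T))
    {τ m : ℝ} (hτ : 0 < τ) (ha0 : 0 ≤ m - τ) (hbT : m + τ ≤ T) :
    ‖f1 m - (2 * τ)⁻¹ • (f (m + τ) - f (m - τ))‖ ^ 2 ≤
      τ^3/40 * ((∫ s in (m-τ)..m, ‖f3 s‖^2) + ∫ s in m..(m+τ), ‖f3 s‖^2) := by
  have ha : m - τ ∈ Set.Icc (0:ℝ) T := ⟨ha0, by linarith⟩
  have hb : m + τ ∈ Set.Icc (0:ℝ) T := ⟨by linarith, hbT⟩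
  have hm : m ∈ Set.Icc (0:ℝ) T := ⟨by linarith, by linarith⟩
  set I1 : E := ∫ s in m..(m+τ), (((m+τ) - s)^2/2) • f3 s with hI1def
  set I2 : E := ∫ s in m..(m-τ), (((m-τ) - s)^2/2) • f3 s with hI2def
  have T1 := taylor_two hf hf1 hf2 hf3 hm hb
  have T2 := taylor_two hf hf1 hf2 hf3 hm ha
  have e1 : m + τ - m = τ := by ring
  have e2 : m - τ - m = -τ := by ring
  rw [e1] at T1
  rw [e2] at T2
  -- key algebraic identity
  have hE : f1 m - (2 * τ)⁻¹ • (f (m + τ) - f (m - τ)) = (2*τ)⁻¹ • (I2 - I1) := by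
    rw [T1, T2, ← hI1def, ← hI2def]
    have h2τ : (2*τ) ≠ 0 := by positivity
    match_scalars <;> field_simp <;> ring
  -- norm bounds on I1, I2
  set B1 : ℝ := ∫ s in (m-τ)..m, ‖f3 s‖^2 with hB1def
  set B2 : ℝ := ∫ s in m..(m+τ), ‖f3 s‖^2 with hB2def
  set K : ℝ := Real.sqrt (τ^5/20) with hKdef
  have hcont_n : ContinuousOn (fun s => ‖f3 s‖) (Set.Icc (0:ℝ) T) := hf3.norm
  have hsubL : Set.Icc (m-τ) m ⊆ Set.Icc (0:ℝ) T :=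
    Set.Icc_subset_Icc ha.1 hm.2
  have hsubR : Set.Icc m (m+τ) ⊆ Set.Icc (0:ℝ) T :=
    Set.Icc_subset_Icc hm.1 hb.2
  have hI1 : ‖I1‖ ≤ K * Real.sqrt B2 := by
    have hab : m ≤ m + τ := by linarith
    have step1 : ‖I1‖ ≤ ∫ s in m..(m+τ), (((m+τ) - s)^2/2) * ‖f3 s‖ := by
      rw [hI1def]
      refine le_trans (intervalIntegral.norm_integral_le_integral_norm hab) ?_
      refine le_of_eq (intervalIntegral.integral_congr fun s hs => ?_)
      rw [norm_smul, Real.norm_eq_abs, abs_of_nonneg (by positivity)]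
    refine step1.trans ?_
    have hcs := cs_interval hab (u := fun s => ((m+τ) - s)^2/2) (v := fun s => ‖f3 s‖)
      (by fun_prop) (hcont_n.mono hsubR) (fun s _ => by positivity) (fun s _ => norm_nonneg _)
      (by rw [poly_int_b m (m+τ), e1]; positivity)
    rw [poly_int_b m (m+τ), e1] at hcs
    exact hcs
  have hI2 : ‖I2‖ ≤ K * Real.sqrt B1 := by
    have hab : m - τ ≤ m := by linarith
    have hsymm : I2 = -∫ s in (m-τ)..m, (((m-τ) - s)^2/2) • f3 s := by
      rw [hI2def, intervalIntegral.integral_symm]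
    rw [hsymm, norm_neg]
    have step1 : ‖∫ s in (m-τ)..m, (((m-τ) - s)^2/2) • f3 s‖ ≤
        ∫ s in (m-τ)..m, (((m-τ) - s)^2/2) * ‖f3 s‖ := by
      refine le_trans (intervalIntegral.norm_integral_le_integral_norm hab) ?_
      refine le_of_eq (intervalIntegral.integral_congr fun s hs => ?_)
      rw [norm_smul, Real.norm_eq_abs, abs_of_nonneg (by positivity)]
    refine step1.trans ?_
    have hpoly : (∫ s in (m-τ)..m, (((m-τ) - s)^2/2)^2) = τ^5/20 := by
      rw [poly_int_a (m-τ) m]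
      ring_nf
    have hcs := cs_interval hab (u := fun s => ((m-τ) - s)^2/2) (v := fun s => ‖f3 s‖)
      (by fun_prop) (hcont_n.mono hsubL) (fun s _ => by positivity) (fun s _ => norm_nonneg _)
      (by rw [hpoly]; positivity)
    rw [hpoly] at hcs
    exact hcs
  -- assemble
  have hnorm : ‖f1 m - (2 * τ)⁻¹ • (f (m + τ) - f (m - τ))‖ ≤
      (2*τ)⁻¹ * (K * Real.sqrt B1 + K * Real.sqrt B2) := by
    rw [hE, norm_smul, Real.norm_eq_abs, abs_of_pos (by positivity)]
    gcongr
    exact (norm_sub_le _ _).trans (by gcongr)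
  have hK2 : K^2 = τ^5/20 := Real.sq_sqrt (by positivity)
  have hKpos : 0 ≤ K := Real.sqrt_nonneg _
  set s1 := Real.sqrt B1 with hs1
  set s2 := Real.sqrt B2 with hs2
  have hs1sq : s1^2 = B1 := Real.sq_sqrt (intervalIntegral.integral_nonneg (by linarith)
    (fun s _ => by positivity))
  have hs2sq : s2^2 = B2 := Real.sq_sqrt (intervalIntegral.integral_nonneg (by linarith)
    (fun s _ => by positivity))
  have hs1n : 0 ≤ s1 := Real.sqrt_nonneg _
  have hs2n : 0 ≤ s2 := Real.sqrt_nonneg _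
  have hsq : ‖f1 m - (2 * τ)⁻¹ • (f (m + τ) - f (m - τ))‖^2 ≤
      ((2*τ)⁻¹ * (K * s1 + K * s2))^2 := by
    apply pow_le_pow_left₀ (norm_nonneg _) hnorm
  refine hsq.trans ?_
  have hrw : ((2*τ)⁻¹ * (K * s1 + K * s2))^2 = 1/(4*τ^2) * K^2 * (s1+s2)^2 := by
    field_simp
    ring
  rw [hrw, hK2, ← hs1sq, ← hs2sq]
  have h2 : (s1+s2)^2 ≤ 2*(s1^2 + s2^2) := by nlinarith [sq_nonneg (s1 - s2)]
  calc 1/(4*τ^2) * (τ^5/20) * (s1+s2)^2 ≤ 1/(4*τ^2) * (τ^5/20) * (2*(s1^2+s2^2)) := by gcongr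
    _ = τ^3/40 * (s1^2 + s2^2) := by field_simp; ring

/-- Summed consistency estimate for the centered (leap-frog) difference quotient
(Lemma 4.2, first two inequalities):
`τ ∑_{n=1}^{N-1} ‖f'(t_n) - (f(t_{n+1}) - f(t_{n-1}))/(2τ)‖² ≤ (τ⁴/20) ∫_0^T ‖f'''(s)‖² ds`,
where `τ = T/N` and `t_n = n τ`. -/
theorem centered_difference_summed_consistency
    {E : Type*} [NormedAddCommGroup E] [NormedSpace ℝ E] [CompleteSpace E]
    (T : ℝ) (hT : 0 < T) (N : ℕ) (hN : 2 ≤ N) (τ : ℝ) (hτ : τ = T / N)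
    (f f1 f2 f3 : ℝ → E)
    (hf : ∀ s ∈ Set.Icc (0 : ℝ) T, HasDerivWithinAt f (f1 s) (Set.Icc (0 : ℝ) T) s)
    (hf1 : ∀ s ∈ Set.Icc (0 : ℝ) T, HasDerivWithinAt f1 (f2 s) (Set.Icc (0 : ℝ) T) s)
    (hf2 : ∀ s ∈ Set.Icc (0 : ℝ) T, HasDerivWithinAt f2 (f3 s) (Set.Icc (0 : ℝ) T) s)
    (hf3 : ContinuousOn f3 (Set.Icc (0 : ℝ) T)) :
    τ * ∑ n ∈ Finset.Icc 1 (N - 1),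
        ‖f1 ((n : ℝ) * τ) -
          (2 * τ)⁻¹ • (f (((n : ℝ) + 1) * τ) - f (((n : ℝ) - 1) * τ))‖ ^ 2 ≤
      τ ^ 4 / 20 * ∫ s in (0 : ℝ)..T, ‖f3 s‖ ^ 2 := by
  have hNpos : 0 < (N:ℝ) := by positivity
  have hτpos : 0 < τ := by rw [hτ]; positivity
  have hNτ : (N:ℝ) * τ = T := by rw [hτ]; field_simp
  set B : ℕ → ℝ := fun k => ∫ s in ((k:ℝ)*τ)..(((k:ℝ)+1)*τ), ‖f3 s‖^2 with hBdef
  have hBnn : ∀ k, 0 ≤ B k := by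
    intro k
    apply intervalIntegral.integral_nonneg (by nlinarith [Nat.cast_nonneg (α := ℝ) k])
    intro s _; positivity
  -- per-term bound
  have hterm : ∀ n ∈ Finset.Icc 1 (N-1),
      ‖f1 ((n : ℝ) * τ) -
          (2 * τ)⁻¹ • (f (((n : ℝ) + 1) * τ) - f (((n : ℝ) - 1) * τ))‖ ^ 2 ≤
        τ^3/40 * (B (n-1) + B n) := by
    intro n hn
    rw [Finset.mem_Icc] at hn
    have hn1 : (1:ℝ) ≤ (n:ℝ) := by exact_mod_cast hn.1
    have hnN : (n:ℝ) + 1 ≤ (N:ℝ) := by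
      have : n + 1 ≤ N := by omega
      exact_mod_cast this
    set m := (n:ℝ) * τ with hm
    have ha0 : 0 ≤ m - τ := by nlinarith
    have hbT : m + τ ≤ T := by nlinarith
    have h := per_step hf hf1 hf2 hf3 hτpos ha0 hbT
    have e1 : ((n:ℝ) + 1) * τ = m + τ := by rw [hm]; ring
    have e2 : ((n:ℝ) - 1) * τ = m - τ := by rw [hm]; ring
    rw [e1, e2]
    refine h.trans (le_of_eq ?_)
    congr 1
    have hc : ((n - 1 : ℕ) : ℝ) = (n:ℝ) - 1 := by
      have := hn.1
      push_cast [Nat.cast_sub this]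
      ring
    rw [hBdef]
    simp only [hc]
    congr 1
    · congr 1 <;> ring
    · congr 1 <;> ring
  -- sum bound
  have hsum1 : ∑ n ∈ Finset.Icc 1 (N - 1),
      ‖f1 ((n : ℝ) * τ) -
          (2 * τ)⁻¹ • (f (((n : ℝ) + 1) * τ) - f (((n : ℝ) - 1) * τ))‖ ^ 2 ≤
      ∑ n ∈ Finset.Icc 1 (N - 1), τ^3/40 * (B (n-1) + B n) :=
    Finset.sum_le_sum hterm
  have hNm1 : N - 1 + 1 = N := by omega
  have hshift : ∑ n ∈ Finset.Icc 1 (N - 1), (B (n-1) + B n)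
      = ∑ i ∈ Finset.range (N-1), (B i + B (i+1)) := by
    rw [← Finset.Ico_add_one_right_eq_Icc, hNm1, Finset.sum_Ico_eq_sum_range]
    apply Finset.sum_congr (by congr 1)
    intro i _
    congr 2 <;> omega
  have htel : ∑ k ∈ Finset.range N, B k = ∫ s in (0:ℝ)..T, ‖f3 s‖^2 := by
    have hint : ∀ k, k < N → IntervalIntegrable (fun s => ‖f3 s‖^2) volume
        ((k:ℝ)*τ) (((k+1:ℕ):ℝ)*τ) := by
      intro k hk
      apply ContinuousOn.intervalIntegrable
      apply ((hf3.norm).pow 2).mono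
      rw [Set.uIcc_of_le (by push_cast; nlinarith [Nat.cast_nonneg (α := ℝ) k])]
      apply Set.Icc_subset_Icc
      · positivity
      · push_cast
        rw [← hNτ]
        have : (k:ℝ) + 1 ≤ (N:ℝ) := by exact_mod_cast hk
        nlinarith
    have := intervalIntegral.sum_integral_adjacent_intervals
      (a := fun k => (k:ℝ)*τ) (n := N) (f := fun s => ‖f3 s‖^2) hint
    rw [hBdef]
    simp only [Nat.cast_zero, zero_mul] at this ⊢
    calc ∑ x ∈ Finset.range N, ∫ (s : ℝ) in (x:ℝ)*τ..((x:ℝ)+1)*τ, ‖f3 s‖^2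
        = ∑ x ∈ Finset.range N, ∫ (s : ℝ) in (x:ℝ)*τ..(((x+1:ℕ)):ℝ)*τ, ‖f3 s‖^2 := by
          apply Finset.sum_congr rfl
          intro x _
          congr 1
          push_cast
          ring
      _ = ∫ (s : ℝ) in (0:ℝ)..(N:ℝ)*τ, ‖f3 s‖^2 := this
      _ = ∫ (s : ℝ) in (0:ℝ)..T, ‖f3 s‖^2 := by rw [hNτ]
  -- assemble
  set I : ℝ := ∫ s in (0:ℝ)..T, ‖f3 s‖^2 with hIdef
  have hStot : ∑ n ∈ Finset.Icc 1 (N - 1), (B (n-1) + B n) ≤ 2 * I := by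
    rw [hshift, Finset.sum_add_distrib]
    have h1 : ∑ i ∈ Finset.range (N-1), B i ≤ ∑ i ∈ Finset.range N, B i :=
      Finset.sum_le_sum_of_subset_of_nonneg (Finset.range_subset_range.mpr (by omega))
        (fun i _ _ => hBnn i)
    have h2 : ∑ i ∈ Finset.range (N-1), B (i+1) ≤ ∑ i ∈ Finset.range N, B i := by
      have hsucc := Finset.sum_range_succ' B (N-1)
      rw [hNm1] at hsucc
      linarith [hBnn 0]
    rw [← htel]
    linarith
  have hInn : 0 ≤ I := by
    rw [← htel]
    exact Finset.sum_nonneg fun k _ => hBnn k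
  calc τ * ∑ n ∈ Finset.Icc 1 (N - 1),
        ‖f1 ((n : ℝ) * τ) -
          (2 * τ)⁻¹ • (f (((n : ℝ) + 1) * τ) - f (((n : ℝ) - 1) * τ))‖ ^ 2
      ≤ τ * ∑ n ∈ Finset.Icc 1 (N - 1), τ^3/40 * (B (n-1) + B n) := by
        apply mul_le_mul_of_nonneg_left hsum1 hτpos.le
    _ = τ^4/40 * ∑ n ∈ Finset.Icc 1 (N - 1), (B (n-1) + B n) := by
        rw [← Finset.mul_sum]
        ring
    _ ≤ τ^4/40 * (2 * I) := by
        apply mul_le_mul_of_nonneg_left hStot (by positivity)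
    _ = τ^4/20 * I := by ring
end

section
/- Let E be a real Banach space, let T > 0, let N ≥ 2 be an integer, set τ = T/N and t_n = n·τ for 0 ≤ n ≤ N, and let f : ℝ → E be twice continuously differentiable on [0, T]. Then τ·Σ_{n=1}^{N−1} ‖f(t_n) − (f(t_{n+1}) + f(t_{n−1}))/2‖² ≤ (τ⁴/3)·∫_{0}^{T} ‖f''(s)‖² ds. -/
open MeasureTheory intervalIntegral Filter
open scoped Topology

/-- Cauchy–Schwarz for interval integrals of continuous functions, when `∫ w² > 0`. -/
lemma cs_interval_s7 (a b : ℝ) (hab : a ≤ b) (w φ : ℝ → ℝ)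
    (hw : ContinuousOn w (Set.Icc a b)) (hφ : ContinuousOn φ (Set.Icc a b))
    (hS : 0 < ∫ s in a..b, w s ^ 2) :
    (∫ s in a..b, w s * φ s) ^ 2 ≤ (∫ s in a..b, w s ^ 2) * ∫ s in a..b, φ s ^ 2 := by
  have huIcc : Set.uIcc a b = Set.Icc a b := Set.uIcc_of_le hab
  have hwi : IntervalIntegrable w volume a b := (huIcc ▸ hw).intervalIntegrable
  have hφi : IntervalIntegrable φ volume a b := (huIcc ▸ hφ).intervalIntegrable
  set S := ∫ s in a..b, w s ^ 2 with hSdef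
  set P := ∫ s in a..b, w s * φ s with hPdef
  set Q := ∫ s in a..b, φ s ^ 2 with hQdef
  have key : ∀ c : ℝ, 0 ≤ c ^ 2 * S - 2 * c * P + Q := by
    intro c
    have h1 : IntervalIntegrable (fun s => (c * w s - φ s) ^ 2) volume a b := by
      apply ContinuousOn.intervalIntegrable
      rw [huIcc]
      exact ((continuousOn_const.mul hw).sub hφ).pow 2
    have h2 : (0:ℝ) ≤ ∫ s in a..b, (c * w s - φ s) ^ 2 := by
      apply intervalIntegral.integral_nonneg hab
      intro u _; positivity
    have h3 : (∫ s in a..b, (c * w s - φ s) ^ 2)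
        = c ^ 2 * S - 2 * c * P + Q := by
      have : ∀ s, (c * w s - φ s) ^ 2
          = c ^ 2 * w s ^ 2 - 2 * c * (w s * φ s) + φ s ^ 2 := by intro s; ring
      simp_rw [this]
      have hw2 : IntervalIntegrable (fun s => w s ^ 2) volume a b :=
        ((huIcc ▸ hw).pow 2).intervalIntegrable
      have hφ2 : IntervalIntegrable (fun s => φ s ^ 2) volume a b :=
        ((huIcc ▸ hφ).pow 2).intervalIntegrable
      have hwφ : IntervalIntegrable (fun s => w s * φ s) volume a b :=
        ((huIcc ▸ hw).mul (huIcc ▸ hφ)).intervalIntegrable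
      rw [intervalIntegral.integral_add ((hw2.const_mul _).sub (hwφ.const_mul _)) hφ2,
        intervalIntegral.integral_sub (hw2.const_mul _) (hwφ.const_mul _),
        intervalIntegral.integral_const_mul, intervalIntegral.integral_const_mul]
    linarith [h3 ▸ h2]
  have := key (P / S)
  have h4 : (P / S) ^ 2 * S - 2 * (P / S) * P + Q = Q - P ^ 2 / S := by
    field_simp; ring
  rw [h4] at this
  have h5 : P ^ 2 / S ≤ Q := by linarith
  calc P ^ 2 = P ^ 2 / S * S := by field_simp
  _ ≤ Q * S := mul_le_mul_of_nonneg_right h5 hS.le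
  _ = S * Q := mul_comm _ _

lemma key_local {E : Type*} [NormedAddCommGroup E] [NormedSpace ℝ E] [CompleteSpace E]
    (T τ t : ℝ) (hτ : 0 < τ) (f f1 f2 : ℝ → E)
    (hf : ∀ s ∈ Set.Icc (0 : ℝ) T, HasDerivWithinAt f (f1 s) (Set.Icc (0 : ℝ) T) s)
    (hf1 : ∀ s ∈ Set.Icc (0 : ℝ) T, HasDerivWithinAt f1 (f2 s) (Set.Icc (0 : ℝ) T) s)
    (hf2 : ContinuousOn f2 (Set.Icc (0 : ℝ) T))
    (h1 : 0 ≤ t - τ) (h2 : t + τ ≤ T) :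
    ‖f t - (2 : ℝ)⁻¹ • (f (t + τ) + f (t - τ))‖ ^ 2
      ≤ τ ^ 3 / 6 * ∫ s in (t - τ)..(t + τ), ‖f2 s‖ ^ 2 := by
  have ht0 : 0 < t := by linarith
  have htT : t < T := by linarith
  set φ : ℝ → ℝ := fun s => ‖f2 s‖ with hφdef
  have hφc : ContinuousOn φ (Set.Icc 0 T) := hf2.norm
  have hfc : ContinuousOn f (Set.Icc 0 T) := fun s hs => (hf s hs).continuousWithinAt
  have hf1c : ContinuousOn f1 (Set.Icc 0 T) := fun s hs => (hf1 s hs).continuousWithinAt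
  have hfD : ∀ y ∈ Set.Ioo (0:ℝ) T, HasDerivAt f (f1 y) y := fun y hy =>
    (hf y (Set.Ioo_subset_Icc_self hy)).hasDerivAt (Icc_mem_nhds hy.1 hy.2)
  have hf1D : ∀ y ∈ Set.Ioo (0:ℝ) T, HasDerivAt f1 (f2 y) y := fun y hy =>
    (hf1 y (Set.Ioo_subset_Icc_self hy)).hasDerivAt (Icc_mem_nhds hy.1 hy.2)
  have mapsP : Set.MapsTo (fun x => t + x) (Set.Icc 0 τ) (Set.Icc 0 T) :=
    fun x hx => ⟨by simp only []; linarith [hx.1], by simp only []; linarith [hx.2]⟩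
  have mapsM : Set.MapsTo (fun x => t - x) (Set.Icc 0 τ) (Set.Icc 0 T) :=
    fun x hx => ⟨by simp only []; linarith [hx.2], by simp only []; linarith [hx.1]⟩
  have hsub : Set.Icc (t - τ) (t + τ) ⊆ Set.Icc 0 T :=
    Set.Icc_subset_Icc (by linarith) (by linarith)
  have hmemP : ∀ x ∈ Set.Ioo (0:ℝ) τ, t + x ∈ Set.Ioo (0:ℝ) T :=
    fun x hx => ⟨by linarith [hx.1], by linarith [hx.2]⟩
  have hmemM : ∀ x ∈ Set.Ioo (0:ℝ) τ, t - x ∈ Set.Ioo (0:ℝ) T :=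
    fun x hx => ⟨by linarith [hx.2], by linarith [hx.1]⟩
  -- Step 1 : representation of the second difference
  set V : E := f (t + τ) + f (t - τ) - (2:ℝ) • f t with hVdef
  have hL1int : IntervalIntegrable (fun x => f1 (t + x) - f1 (t - x)) volume 0 τ := by
    apply ContinuousOn.intervalIntegrable
    rw [Set.uIcc_of_le hτ.le]
    exact (hf1c.comp (continuous_const.add continuous_id).continuousOn mapsP).sub
      (hf1c.comp (continuous_const.sub continuous_id).continuousOn mapsM)
  have hVrep : (∫ x in (0:ℝ)..τ, (f1 (t + x) - f1 (t - x))) = V := by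
    have := intervalIntegral.integral_eq_sub_of_hasDeriv_right_of_le hτ.le
      (f := fun x => f (t + x) + f (t - x))
      (f' := fun x => f1 (t + x) - f1 (t - x)) ?_ ?_ hL1int
    · rw [this]; simp [hVdef, two_smul]
    · exact (hfc.comp (continuous_const.add continuous_id).continuousOn mapsP).add
        (hfc.comp (continuous_const.sub continuous_id).continuousOn mapsM)
    · intro x hx
      have hp : HasDerivAt (fun x => f (t + x)) (f1 (t + x)) x := by
        simpa [Function.comp_def] using (hfD _ (hmemP x hx)).scomp x ((hasDerivAt_id x).const_add t)
      have hm : HasDerivAt (fun x => f (t - x)) (-f1 (t - x)) x := by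
        simpa [Function.comp_def] using (hfD _ (hmemM x hx)).scomp x ((hasDerivAt_id x).const_sub t)
      have := (hp.add hm).hasDerivWithinAt (s := Set.Ioi x)
      simpa [sub_eq_add_neg, Pi.add_def] using this
  -- Step 2 : pointwise bound on the integrand
  set g : ℝ → ℝ := fun x => ∫ s in (t - x)..(t + x), φ s with hgdef
  have hstep2 : ∀ x ∈ Set.Icc (0:ℝ) τ, ‖f1 (t + x) - f1 (t - x)‖ ≤ g x := by
    intro x hx
    have hxle : t - x ≤ t + x := by linarith [hx.1]
    have hsub' : Set.Icc (t - x) (t + x) ⊆ Set.Icc 0 T :=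
      Set.Icc_subset_Icc (by linarith [hx.2]) (by linarith [hx.2])
    have hf2int : IntervalIntegrable f2 volume (t - x) (t + x) := by
      apply ContinuousOn.intervalIntegrable
      rw [Set.uIcc_of_le hxle]; exact hf2.mono hsub'
    have hrep : (∫ s in (t - x)..(t + x), f2 s) = f1 (t + x) - f1 (t - x) := by
      apply intervalIntegral.integral_eq_sub_of_hasDeriv_right_of_le hxle
        (hf1c.mono hsub') ?_ hf2int
      intro s hs
      have hsm : s ∈ Set.Ioo (0:ℝ) T := ⟨by linarith [hs.1, hx.2], by linarith [hs.2, hx.2]⟩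
      exact (hf1D s hsm).hasDerivWithinAt
    rw [← hrep]
    exact intervalIntegral.norm_integral_le_integral_norm hxle
  -- primitives
  set a : ℝ := t - τ with hadef
  set b : ℝ := t + τ with hbdef
  have hab : a ≤ b := by rw [hadef, hbdef]; linarith
  have huab : Set.uIcc a b = Set.Icc a b := Set.uIcc_of_le hab
  set ψ : ℝ → ℝ := fun s => |s - t| * φ s with hψdef
  have hψc : ContinuousOn ψ (Set.Icc 0 T) :=
    ((continuous_id.sub continuous_const).abs.continuousOn).mul hφc
  have hφab : IntervalIntegrable φ volume a b := by
    apply ContinuousOn.intervalIntegrable; rw [huab]; exact hφc.mono hsub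
  have hψab : IntervalIntegrable ψ volume a b := by
    apply ContinuousOn.intervalIntegrable; rw [huab]; exact hψc.mono hsub
  set F : ℝ → ℝ := fun y => ∫ s in a..y, φ s with hFdef
  set Fψ : ℝ → ℝ := fun y => ∫ s in a..y, ψ s with hFψdef
  have hinty : ∀ y ∈ Set.Icc a b, IntervalIntegrable φ volume a y ∧
      IntervalIntegrable ψ volume a y := by
    intro y hy
    have h5 : Set.uIcc a y ⊆ Set.Icc 0 T := by
      rw [Set.uIcc_of_le hy.1]
      exact (Set.Icc_subset_Icc le_rfl hy.2).trans hsub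
    exact ⟨(hφc.mono h5).intervalIntegrable, (hψc.mono h5).intervalIntegrable⟩
  have hFc : ContinuousOn F (Set.Icc a b) := by
    rw [← huab]; exact intervalIntegral.continuousOn_primitive_interval'
      hφab (by rw [huab]; exact ⟨le_rfl, hab⟩)
  have hFψcont : ContinuousOn Fψ (Set.Icc a b) := by
    rw [← huab]; exact intervalIntegral.continuousOn_primitive_interval'
      hψab (by rw [huab]; exact ⟨le_rfl, hab⟩)
  have mapsP' : Set.MapsTo (fun x => t + x) (Set.Icc 0 τ) (Set.Icc a b) :=
    fun x hx => ⟨by rw [hadef]; simp only []; linarith [hx.1], by rw [hbdef]; simp only []; linarith [hx.2]⟩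
  have mapsM' : Set.MapsTo (fun x => t - x) (Set.Icc 0 τ) (Set.Icc a b) :=
    fun x hx => ⟨by rw [hadef]; simp only []; linarith [hx.2], by rw [hbdef]; simp only []; linarith [hx.1]⟩
  have hgF : ∀ x ∈ Set.Icc (0:ℝ) τ, g x = F (t + x) - F (t - x) := by
    intro x hx
    rw [hFdef]
    exact (intervalIntegral.integral_interval_sub_left
      (hinty _ (mapsP' hx)).1 (hinty _ (mapsM' hx)).1).symm
  have hgc : ContinuousOn g (Set.Icc 0 τ) := by
    have hc : ContinuousOn (fun x => F (t + x) - F (t - x)) (Set.Icc 0 τ) :=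
      (hFc.comp (continuous_const.add continuous_id).continuousOn mapsP').sub
        (hFc.comp (continuous_const.sub continuous_id).continuousOn mapsM')
    exact hc.congr hgF
  -- Step 3 : ‖V‖ ≤ ∫ g
  have hgint : IntervalIntegrable g volume 0 τ := by
    apply ContinuousOn.intervalIntegrable; rwa [Set.uIcc_of_le hτ.le]
  have hVK : ‖V‖ ≤ ∫ x in (0:ℝ)..τ, g x := by
    rw [← hVrep]
    calc ‖∫ x in (0:ℝ)..τ, (f1 (t + x) - f1 (t - x))‖
        ≤ ∫ x in (0:ℝ)..τ, ‖f1 (t + x) - f1 (t - x)‖ :=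
          intervalIntegral.norm_integral_le_integral_norm hτ.le
      _ ≤ ∫ x in (0:ℝ)..τ, g x := by
          apply intervalIntegral.integral_mono_on hτ.le hL1int.norm hgint
          exact hstep2
  -- Step 4 : the kernel identity
  have hmeas : ∀ y ∈ Set.Ioo (0:ℝ) T,
      StronglyMeasurableAtFilter φ (𝓝 y) volume ∧ StronglyMeasurableAtFilter ψ (𝓝 y) volume :=
    fun y hy => ⟨ContinuousOn.stronglyMeasurableAtFilter isOpen_Ioo
        (hφc.mono Set.Ioo_subset_Icc_self) y hy,
      ContinuousOn.stronglyMeasurableAtFilter isOpen_Ioo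
        (hψc.mono Set.Ioo_subset_Icc_self) y hy⟩
  have hyIoo : ∀ y ∈ Set.Ioo a b, y ∈ Set.Ioo (0:ℝ) T := by
    intro y hy
    constructor
    · have := hy.1; rw [hadef] at this; linarith
    · have := hy.2; rw [hbdef] at this; linarith
  have hFD : ∀ y ∈ Set.Ioo a b, HasDerivAt F (φ y) y := by
    intro y hy
    exact intervalIntegral.integral_hasDerivAt_right
      (hinty y (Set.Ioo_subset_Icc_self hy)).1 (hmeas y (hyIoo y hy)).1
      (hφc.continuousAt (Icc_mem_nhds (hyIoo y hy).1 (hyIoo y hy).2))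
  have hFψD : ∀ y ∈ Set.Ioo a b, HasDerivAt Fψ (ψ y) y := by
    intro y hy
    exact intervalIntegral.integral_hasDerivAt_right
      (hinty y (Set.Ioo_subset_Icc_self hy)).2 (hmeas y (hyIoo y hy)).2
      (hψc.continuousAt (Icc_mem_nhds (hyIoo y hy).1 (hyIoo y hy).2))
  have hmemP' : ∀ x ∈ Set.Ioo (0:ℝ) τ, t + x ∈ Set.Ioo a b := by
    intro x hx; rw [hadef, hbdef]; exact ⟨by linarith [hx.1], by linarith [hx.2]⟩
  have hmemM' : ∀ x ∈ Set.Ioo (0:ℝ) τ, t - x ∈ Set.Ioo a b := by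
    intro x hx; rw [hadef, hbdef]; exact ⟨by linarith [hx.2], by linarith [hx.1]⟩
  have hGB : (∫ x in (0:ℝ)..τ, g x) = ∫ s in a..b, (τ - |s - t|) * φ s := by
    have hFTC := intervalIntegral.integral_eq_sub_of_hasDeriv_right_of_le hτ.le
      (f := fun x => x * g x - (Fψ (t + x) - Fψ (t - x))) (f' := g) ?_ ?_ hgint
    · rw [hFTC]
      simp only [hgdef, hFψdef]
      rw [show t + (0:ℝ) = t by ring, show t - (0:ℝ) = t by ring, ← hadef, ← hbdef]
      simp only [intervalIntegral.integral_same, sub_self, zero_mul, sub_zero, mul_zero]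
      rw [← intervalIntegral.integral_const_mul, ← intervalIntegral.integral_sub
        (hφab.const_mul τ) hψab]
      apply intervalIntegral.integral_congr
      intro s _
      rw [hψdef]; ring
    · apply ContinuousOn.sub
      · exact continuousOn_id.mul hgc
      · exact ((hFψcont.comp (continuous_const.add continuous_id).continuousOn mapsP').sub
          (hFψcont.comp (continuous_const.sub continuous_id).continuousOn mapsM'))
    · intro x hx
      have dP : HasDerivAt (fun x => F (t + x)) (φ (t + x)) x := by
        simpa [Function.comp_def] using (hFD _ (hmemP' x hx)).scomp x ((hasDerivAt_id x).const_add t)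
      have dM : HasDerivAt (fun x => F (t - x)) (-φ (t - x)) x := by
        simpa [Function.comp_def] using (hFD _ (hmemM' x hx)).scomp x ((hasDerivAt_id x).const_sub t)
      have dψP : HasDerivAt (fun x => Fψ (t + x)) (ψ (t + x)) x := by
        simpa [Function.comp_def] using (hFψD _ (hmemP' x hx)).scomp x ((hasDerivAt_id x).const_add t)
      have dψM : HasDerivAt (fun x => Fψ (t - x)) (-ψ (t - x)) x := by
        simpa [Function.comp_def] using (hFψD _ (hmemM' x hx)).scomp x ((hasDerivAt_id x).const_sub t)
      have hgD : HasDerivAt g (φ (t + x) + φ (t - x)) x := by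
        have h6 : HasDerivAt (fun x => F (t + x) - F (t - x)) (φ (t + x) + φ (t - x)) x := by
          simpa [sub_neg_eq_add, Pi.sub_def] using dP.sub dM
        apply HasDerivAt.congr_of_eventuallyEq h6
        filter_upwards [Ioo_mem_nhds hx.1 hx.2] with y hy
        exact hgF y (Set.Ioo_subset_Icc_self hy)
      have hHD : HasDerivAt (fun x => Fψ (t + x) - Fψ (t - x)) (ψ (t + x) + ψ (t - x)) x := by
        simpa [sub_neg_eq_add, Pi.sub_def] using dψP.sub dψM
      have total := (((hasDerivAt_id x).mul hgD).sub hHD)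
      have hval : 1 * g x + id x * (φ (t + x) + φ (t - x)) - (ψ (t + x) + ψ (t - x)) = g x := by
        rw [hψdef]
        simp only [id]
        rw [show t + x - t = x by ring, show t - x - t = -x by ring, abs_neg,
          abs_of_pos hx.1]
        ring
      rw [hval] at total
      exact total.hasDerivWithinAt
  -- Step 5 : compute ∫ (τ - |s-t|)²
  have hwc : ContinuousOn (fun s => τ - |s - t|) (Set.Icc a b) :=
    (continuous_const.sub (continuous_id.sub continuous_const).abs).continuousOn
  have hS : (∫ s in a..b, (τ - |s - t|) ^ 2) = 2 * τ ^ 3 / 3 := by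
    have hw2l : IntervalIntegrable (fun s => (τ - |s - t|) ^ 2) volume a t := by
      apply ContinuousOn.intervalIntegrable
      apply Continuous.continuousOn; fun_prop
    have hw2r : IntervalIntegrable (fun s => (τ - |s - t|) ^ 2) volume t b := by
      apply ContinuousOn.intervalIntegrable
      apply Continuous.continuousOn; fun_prop
    rw [← intervalIntegral.integral_add_adjacent_intervals hw2l hw2r]
    have hleft : (∫ s in a..t, (τ - |s - t|) ^ 2) = τ ^ 3 / 3 := by
      have : (∫ s in a..t, (τ - |s - t|) ^ 2) = ∫ s in a..t, (fun u => (τ - u) ^ 2) (t - s) := by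
        apply intervalIntegral.integral_congr
        intro s hs
        rw [Set.uIcc_of_le (by rw [hadef]; linarith)] at hs
        simp only []
        rw [abs_of_nonpos (by linarith [hs.2]), neg_sub]
      rw [this, intervalIntegral.integral_comp_sub_left (fun u => (τ - u) ^ 2) t]
      rw [show t - t = 0 by ring, show t - a = τ by rw [hadef]; ring]
      rw [intervalIntegral.integral_comp_sub_left (fun v => v ^ 2) τ]
      simp [integral_pow]; norm_num
    have hright : (∫ s in t..b, (τ - |s - t|) ^ 2) = τ ^ 3 / 3 := by
      have : (∫ s in t..b, (τ - |s - t|) ^ 2) = ∫ s in t..b, (fun u => (τ - u) ^ 2) (s - t) := by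
        apply intervalIntegral.integral_congr
        intro s hs
        rw [Set.uIcc_of_le (by rw [hbdef]; linarith)] at hs
        simp only []
        rw [abs_of_nonneg (by linarith [hs.1])]
      rw [this, intervalIntegral.integral_comp_sub_right (fun u => (τ - u) ^ 2) t]
      rw [show t - t = 0 by ring, show b - t = τ by rw [hbdef]; ring]
      rw [intervalIntegral.integral_comp_sub_left (fun v => v ^ 2) τ]
      simp [integral_pow]; norm_num
    rw [hleft, hright]; ring
  -- Step 6 : Cauchy–Schwarz
  have hCS := cs_interval_s7 a b hab (fun s => τ - |s - t|) φ hwc (hφc.mono hsub)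
    (by rw [hS]; positivity)
  rw [hS] at hCS
  -- Step 7 : assemble
  set K := ∫ s in a..b, (τ - |s - t|) * φ s with hKdef
  set Q := ∫ s in a..b, φ s ^ 2 with hQdef
  have hVK' : ‖V‖ ≤ K := hGB ▸ hVK
  have hK0 : 0 ≤ K := le_trans (norm_nonneg V) hVK'
  have hterm : f t - (2:ℝ)⁻¹ • (f (t + τ) + f (t - τ)) = -((2:ℝ)⁻¹ • V) := by
    rw [hVdef]; module
  have hQ0 : 0 ≤ Q := by
    rw [hQdef]
    apply intervalIntegral.integral_nonneg hab
    intro s _; positivity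
  have hnorm : ‖f t - (2:ℝ)⁻¹ • (f (t + τ) + f (t - τ))‖ = 2⁻¹ * ‖V‖ := by
    rw [hterm, norm_neg, norm_smul]
    norm_num
  rw [hnorm]
  have hV2 : ‖V‖ ^ 2 ≤ K ^ 2 := pow_le_pow_left₀ (norm_nonneg V) hVK' 2
  nlinarith [hCS, hV2, hK0, hQ0]

/-- Summed consistency estimate for the two-level average of the Crank–Nicolson
Leap-Frog scheme (Lemma 4.2, last two inequalities):
`τ ∑_{n=1}^{N-1} ‖f(t_n) - (f(t_{n+1}) + f(t_{n-1}))/2‖² ≤ (τ⁴/3) ∫_0^T ‖f''(s)‖² ds`,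
where `τ = T/N` and `t_n = n τ`. -/
theorem two_level_average_summed_consistency
    {E : Type*} [NormedAddCommGroup E] [NormedSpace ℝ E] [CompleteSpace E]
    (T : ℝ) (hT : 0 < T) (N : ℕ) (hN : 2 ≤ N) (τ : ℝ) (hτ : τ = T / N)
    (f f1 f2 : ℝ → E)
    (hf : ∀ s ∈ Set.Icc (0 : ℝ) T, HasDerivWithinAt f (f1 s) (Set.Icc (0 : ℝ) T) s)
    (hf1 : ∀ s ∈ Set.Icc (0 : ℝ) T, HasDerivWithinAt f1 (f2 s) (Set.Icc (0 : ℝ) T) s)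
    (hf2 : ContinuousOn f2 (Set.Icc (0 : ℝ) T)) :
    τ * ∑ n ∈ Finset.Icc 1 (N - 1),
        ‖f ((n : ℝ) * τ) -
          (2 : ℝ)⁻¹ • (f (((n : ℝ) + 1) * τ) + f (((n : ℝ) - 1) * τ))‖ ^ 2 ≤
      τ ^ 4 / 3 * ∫ s in (0 : ℝ)..T, ‖f2 s‖ ^ 2 := by
  have hN0 : (0:ℝ) < N := by positivity
  have hτ0 : 0 < τ := by rw [hτ]; positivity
  have hNτ : (N:ℝ) * τ = T := by rw [hτ]; field_simp
  set B : ℕ → ℝ := fun k => ∫ s in ((k:ℝ) * τ)..(((k:ℝ) + 1) * τ), ‖f2 s‖ ^ 2 with hBdef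
  have hsubk : ∀ k : ℕ, k + 1 ≤ N → Set.uIcc ((k:ℝ) * τ) (((k:ℝ) + 1) * τ) ⊆ Set.Icc 0 T := by
    intro k hk
    rw [Set.uIcc_of_le (by nlinarith)]
    apply Set.Icc_subset_Icc (by positivity)
    have : ((k:ℝ) + 1) ≤ (N:ℝ) := by exact_mod_cast hk
    nlinarith
  have hBint : ∀ k : ℕ, k + 1 ≤ N →
      IntervalIntegrable (fun s => ‖f2 s‖ ^ 2) volume ((k:ℝ) * τ) (((k:ℝ) + 1) * τ) :=
    fun k hk => ((hf2.norm.pow 2).mono (hsubk k hk)).intervalIntegrable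
  have hB0 : ∀ k : ℕ, 0 ≤ B k := by
    intro k
    apply intervalIntegral.integral_nonneg (by nlinarith)
    intro s _; positivity
  -- each term
  have hterm : ∀ n ∈ Finset.Icc 1 (N - 1),
      ‖f ((n : ℝ) * τ) - (2 : ℝ)⁻¹ • (f (((n : ℝ) + 1) * τ) + f (((n : ℝ) - 1) * τ))‖ ^ 2
        ≤ τ ^ 3 / 6 * (B (n - 1) + B n) := by
    intro n hn
    rw [Finset.mem_Icc] at hn
    have hn1 : 1 ≤ n := hn.1
    have hnN : n + 1 ≤ N := by omega
    have hcast : (1:ℝ) ≤ (n:ℝ) := by exact_mod_cast hn1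
    have hcastN : ((n:ℝ) + 1) ≤ (N:ℝ) := by exact_mod_cast hnN
    set t : ℝ := (n:ℝ) * τ with htdef
    have h1 : 0 ≤ t - τ := by rw [htdef]; nlinarith
    have h2 : t + τ ≤ T := by rw [htdef, ← hNτ]; nlinarith
    have hkey := key_local T τ t hτ0 f f1 f2 hf hf1 hf2 h1 h2
    have e1 : ((n : ℝ) + 1) * τ = t + τ := by rw [htdef]; ring
    have e2 : ((n : ℝ) - 1) * τ = t - τ := by rw [htdef]; ring
    rw [e1, e2]
    refine hkey.trans (le_of_eq ?_)
    have hc1 : ((n - 1 : ℕ) : ℝ) = (n:ℝ) - 1 := by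
      push_cast [Nat.cast_sub hn1]; ring
    have e6 : ((n:ℝ) - 1 + 1) * τ = t := by rw [htdef]; ring
    have i1 : IntervalIntegrable (fun s => ‖f2 s‖ ^ 2) volume (t - τ) t := by
      have h8 := hBint (n-1) (by omega)
      rw [hc1, e2, e6] at h8
      exact h8
    have i2 : IntervalIntegrable (fun s => ‖f2 s‖ ^ 2) volume t (t + τ) := by
      have h8 := hBint n hnN
      rw [e1, ← htdef] at h8
      exact h8
    have eB1 : B (n-1) = ∫ s in (t - τ)..t, ‖f2 s‖ ^ 2 := by
      simp only [hBdef]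
      rw [hc1, e2, e6]
    have eB2 : B n = ∫ s in t..(t + τ), ‖f2 s‖ ^ 2 := by
      simp only [hBdef]
      rw [e1, ← htdef]
    congr 1
    rw [eB1, eB2]
    exact (intervalIntegral.integral_add_adjacent_intervals i1 i2).symm
  -- sum the bound
  have hsum1 : (∑ n ∈ Finset.Icc 1 (N - 1),
      ‖f ((n : ℝ) * τ) - (2 : ℝ)⁻¹ • (f (((n : ℝ) + 1) * τ) + f (((n : ℝ) - 1) * τ))‖ ^ 2)
      ≤ τ ^ 3 / 6 * ∑ n ∈ Finset.Icc 1 (N - 1), (B (n - 1) + B n) := by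
    rw [Finset.mul_sum]
    exact Finset.sum_le_sum hterm
  have hsum2 : (∑ n ∈ Finset.Icc 1 (N - 1), (B (n - 1) + B n))
      ≤ 2 * ∑ k ∈ Finset.range N, B k := by
    rw [Finset.sum_add_distrib]
    have himg : Finset.Icc 1 (N-1) = Finset.image (· + 1) (Finset.Icc 0 (N-2)) := by
      ext m; simp only [Finset.mem_Icc, Finset.mem_image]
      constructor
      · rintro ⟨ha, hb⟩; exact ⟨m - 1, ⟨by omega, by omega⟩, by omega⟩
      · rintro ⟨k, hk, rfl⟩; omega
    have e3 : (∑ n ∈ Finset.Icc 1 (N - 1), B (n - 1)) = ∑ k ∈ Finset.Icc 0 (N-2), B k := by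
      rw [himg, Finset.sum_image (by intros a _ b _ h; simpa using h)]
      simp
    have le1 : (∑ k ∈ Finset.Icc 0 (N-2), B k) ≤ ∑ k ∈ Finset.range N, B k := by
      apply Finset.sum_le_sum_of_subset_of_nonneg
      · intro m hm; simp only [Finset.mem_Icc, Finset.mem_range] at *; omega
      · intros; exact hB0 _
    have le2 : (∑ n ∈ Finset.Icc 1 (N - 1), B n) ≤ ∑ k ∈ Finset.range N, B k := by
      apply Finset.sum_le_sum_of_subset_of_nonneg
      · intro m hm; simp only [Finset.mem_Icc, Finset.mem_range] at *; omega
      · intros; exact hB0 _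
    rw [e3]; linarith
  have htotal : (∑ k ∈ Finset.range N, B k) = ∫ s in (0:ℝ)..T, ‖f2 s‖ ^ 2 := by
    have := intervalIntegral.sum_integral_adjacent_intervals (a := fun k => (k:ℝ) * τ)
      (n := N) (f := fun s => ‖f2 s‖ ^ 2) (μ := volume) ?_
    · rw [hBdef]
      have e4 : ∀ k : ℕ, (((k+1:ℕ)):ℝ) * τ = ((k:ℝ) + 1) * τ := by intro k; push_cast; ring
      calc (∑ k ∈ Finset.range N, ∫ s in ((k:ℝ) * τ)..(((k:ℝ) + 1) * τ), ‖f2 s‖ ^ 2)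
          = ∑ k ∈ Finset.range N, ∫ s in ((k:ℝ) * τ)..((((k+1:ℕ)):ℝ) * τ), ‖f2 s‖ ^ 2 := by
            apply Finset.sum_congr rfl; intro k _; rw [e4]
        _ = ∫ s in ((0:ℕ):ℝ) * τ..((N:ℝ) * τ), ‖f2 s‖ ^ 2 := this
        _ = ∫ s in (0:ℝ)..T, ‖f2 s‖ ^ 2 := by rw [hNτ]; norm_num
    · intro k hk
      have := hBint k (by omega)
      convert this using 2
      push_cast; ring
  have hQtot : 0 ≤ ∫ s in (0:ℝ)..T, ‖f2 s‖ ^ 2 := by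
    rw [← htotal]
    exact Finset.sum_nonneg fun k _ => hB0 k
  calc τ * ∑ n ∈ Finset.Icc 1 (N - 1),
        ‖f ((n : ℝ) * τ) - (2 : ℝ)⁻¹ • (f (((n : ℝ) + 1) * τ) + f (((n : ℝ) - 1) * τ))‖ ^ 2
      ≤ τ * (τ ^ 3 / 6 * ∑ n ∈ Finset.Icc 1 (N - 1), (B (n - 1) + B n)) := by
        apply mul_le_mul_of_nonneg_left hsum1 hτ0.le
    _ ≤ τ * (τ ^ 3 / 6 * (2 * ∑ k ∈ Finset.range N, B k)) := by
        apply mul_le_mul_of_nonneg_left _ hτ0.le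
        apply mul_le_mul_of_nonneg_left hsum2 (by positivity)
    _ = τ ^ 4 / 3 * ∑ k ∈ Finset.range N, B k := by ring
    _ = τ ^ 4 / 3 * ∫ s in (0:ℝ)..T, ‖f2 s‖ ^ 2 := by rw [htotal]
end

section
/- Let u : ℝ² → ℝ² be a continuously differentiable vector field with compact support and let v, w : ℝ² → ℝ² be continuously differentiable vector fields. Then B(u, v, w) = −B(u, w, v). -/
open MeasureTheory

/-- The convective term `((u·∇)v)·w` at a point `x`, where
`((u·∇)v)_i = ∑_j u_j ∂_j v_i`. -/
noncomputable def convTerm (u v w : (Fin 2 → ℝ) → (Fin 2 → ℝ)) (x : Fin 2 → ℝ) : ℝ :=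
  ∑ i, fderiv ℝ v x (u x) i * w x i

/-- The divergence `div u = ∑_j ∂_j u_j` at a point `x`. -/
noncomputable def divg (u : (Fin 2 → ℝ) → (Fin 2 → ℝ)) (x : Fin 2 → ℝ) : ℝ :=
  ∑ j, fderiv ℝ u x (Pi.single j 1) j

/-- The trilinear form
`B(u, v, w) = ∫ ((u·∇)v)·w dx + (1/2) ∫ (div u)(v·w) dx`. -/
noncomputable def Bform (u v w : (Fin 2 → ℝ) → (Fin 2 → ℝ)) : ℝ :=
  (∫ x, convTerm u v w x) + (1 / 2) * ∫ x, divg u x * (∑ i, v x i * w x i)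

/-- Integral of a directional derivative of a `C¹` compactly supported function vanishes. -/
lemma integral_fderiv_apply_eq_zero {g : (Fin 2 → ℝ) → ℝ} (hg : ContDiff ℝ 1 g)
    (hgs : HasCompactSupport g) (y : Fin 2 → ℝ) : ∫ x, fderiv ℝ g x y = 0 := by
  obtain ⟨C, hC⟩ := hg.lipschitzWith_of_hasCompactSupport hgs one_ne_zero
  have h1 : LipschitzWith 0 (fun _ : (Fin 2 → ℝ) => (1:ℝ)) := LipschitzWith.const _
  have key := LipschitzWith.integral_lineDeriv_mul_eq (μ := volume) h1 hC hgs y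
  have hL : ∀ x : Fin 2 → ℝ, lineDeriv ℝ (fun _ : (Fin 2 → ℝ) => (1:ℝ)) x y = 0 := by
    intro x; simp [lineDeriv]
  have hR : ∀ x : Fin 2 → ℝ, lineDeriv ℝ g x (-y) = -(fderiv ℝ g x y) := by
    intro x
    rw [(hg.differentiable one_ne_zero x).lineDeriv_eq_fderiv, map_neg]
  simp only [hL, hR, zero_mul, integral_zero, mul_one] at key
  rw [integral_neg] at key
  linarith [key]

/-- A continuous linear map applied to a vector, written in coordinates. -/
lemma clm_apply_eq_sum (D : (Fin 2 → ℝ) →L[ℝ] (Fin 2 → ℝ)) (y : Fin 2 → ℝ) (i : Fin 2) :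
    D y i = ∑ j, y j * D (Pi.single j 1) i := by
  have : y = ∑ j, y j • (Pi.single j 1 : Fin 2 → ℝ) := by
    funext k
    simp [Finset.sum_apply, Pi.single_apply, eq_comm]
  conv_lhs => rw [this]
  rw [map_sum]
  simp [Finset.sum_apply]

lemma hasFDerivAt_comp_proj {f : (Fin 2 → ℝ) → (Fin 2 → ℝ)} (hf : ContDiff ℝ 1 f)
    (x : Fin 2 → ℝ) (i : Fin 2) :
    HasFDerivAt (fun x => f x i)
      ((ContinuousLinearMap.proj i).comp (fderiv ℝ f x)) x :=
  ((ContinuousLinearMap.proj i).hasFDerivAt.comp x (hf.differentiable one_ne_zero x).hasFDerivAt :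
    HasFDerivAt ((ContinuousLinearMap.proj i : (Fin 2 → ℝ) →L[ℝ] ℝ) ∘ f) _ x)

/-- The key pointwise divergence identity:
`div ((v·w) u) = (u·∇)v·w + (u·∇)w·v + (div u)(v·w)`. -/
lemma pointwise_div_identity (u v w : (Fin 2 → ℝ) → (Fin 2 → ℝ))
    (hu : ContDiff ℝ 1 u) (hv : ContDiff ℝ 1 v) (hw : ContDiff ℝ 1 w) (x : Fin 2 → ℝ) :
    ∑ j, fderiv ℝ (fun y => (∑ i, v y i * w y i) * u y j) x (Pi.single j 1)
      = convTerm u v w x + convTerm u w v x + divg u x * (∑ i, v x i * w x i) := by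
  set Du := fderiv ℝ u x with hDu
  set Dv := fderiv ℝ v x with hDv
  set Dw := fderiv ℝ w x with hDw
  have hS : HasFDerivAt (fun y => ∑ i, v y i * w y i)
      (∑ i, ((v x i) • ((ContinuousLinearMap.proj i).comp Dw)
        + (w x i) • ((ContinuousLinearMap.proj i).comp Dv))) x := by
    apply HasFDerivAt.fun_sum
    intro i _
    exact (hasFDerivAt_comp_proj hv x i).mul (hasFDerivAt_comp_proj hw x i)
  have hg : ∀ j : Fin 2, fderiv ℝ (fun y => (∑ i, v y i * w y i) * u y j) x
      = (∑ i, v x i * w x i) • ((ContinuousLinearMap.proj j).comp Du)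
        + (u x j) • (∑ i, ((v x i) • ((ContinuousLinearMap.proj i).comp Dw)
          + (w x i) • ((ContinuousLinearMap.proj i).comp Dv))) := by
    intro j
    exact (hS.mul (hasFDerivAt_comp_proj hu x j)).fderiv
  simp only [hg]
  have hv' : ∀ i, Dv (u x) i = ∑ j, u x j * Dv (Pi.single j 1) i :=
    fun i => clm_apply_eq_sum Dv (u x) i
  have hw' : ∀ i, Dw (u x) i = ∑ j, u x j * Dw (Pi.single j 1) i :=
    fun i => clm_apply_eq_sum Dw (u x) i
  simp only [convTerm, divg, ← hDu, ← hDv, ← hDw, hv', hw',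
    ContinuousLinearMap.add_apply, ContinuousLinearMap.coe_smul', Pi.smul_apply,
    ContinuousLinearMap.coe_comp', Function.comp_apply, ContinuousLinearMap.proj_apply,
    ContinuousLinearMap.coe_sum', Finset.sum_apply, smul_eq_mul, Fin.sum_univ_two]
  ring

/-- Antisymmetry property (2.14) for the velocity transport term:
`B(u, v, w) = -B(u, w, v)`. -/
theorem Bform_antisymm
    (u v w : (Fin 2 → ℝ) → (Fin 2 → ℝ))
    (hu : ContDiff ℝ 1 u) (hus : HasCompactSupport u)
    (hv : ContDiff ℝ 1 v) (hw : ContDiff ℝ 1 w) :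
    Bform u v w = -Bform u w v := by
  classical
  -- components are C¹
  have hcomp : ∀ (f : (Fin 2 → ℝ) → (Fin 2 → ℝ)), ContDiff ℝ 1 f →
      ∀ i : Fin 2, ContDiff ℝ 1 (fun x => f x i) := by
    intro f hf i
    exact (ContinuousLinearMap.proj i : ((Fin 2 → ℝ)) →L[ℝ] ℝ).contDiff.comp hf
  -- the scalar product v·w is C¹
  have hSvw : ContDiff ℝ 1 (fun x => ∑ i, v x i * w x i) :=
    ContDiff.sum fun i _ => (hcomp v hv i).mul (hcomp w hw i)
  -- the vector field components g j = (v·w) u_j are C¹ with compact support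
  have hgC : ∀ j : Fin 2, ContDiff ℝ 1 (fun x => (∑ i, v x i * w x i) * u x j) :=
    fun j => hSvw.mul (hcomp u hu j)
  have hgS : ∀ j : Fin 2, HasCompactSupport (fun x => (∑ i, v x i * w x i) * u x j) := by
    intro j
    apply hus.mono (f' := fun x => (∑ i, v x i * w x i) * u x j)
    intro x hx
    simp only [Function.mem_support, ne_eq] at hx ⊢
    intro h0
    exact hx (by simp [h0])
  -- the integral of the divergence vanishes
  have hdiv : (∫ x, ∑ j, fderiv ℝ (fun y => (∑ i, v y i * w y i) * u y j) x (Pi.single j 1))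
      = 0 := by
    rw [integral_finset_sum]
    · refine Finset.sum_eq_zero fun j _ => ?_
      exact integral_fderiv_apply_eq_zero (hgC j) (hgS j) _
    · intro j _
      apply Continuous.integrable_of_hasCompactSupport
      · exact (((hgC j).fderiv_right (m := 0) le_rfl).continuous).clm_apply continuous_const
      · apply HasCompactSupport.mono' (hgS j)
        intro x hx
        have := support_fderiv_subset (𝕜 := ℝ) (f := fun y => (∑ i, v y i * w y i) * u y j)
        apply this
        simp only [Function.mem_support, ne_eq] at hx ⊢
        intro h0
        exact hx (by rw [h0]; simp)
  -- integrands: continuity and compact support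
  have hconvCont : ∀ (a b : (Fin 2 → ℝ) → (Fin 2 → ℝ)), ContDiff ℝ 1 a → ContDiff ℝ 1 b →
      Continuous (convTerm u a b) := by
    intro a b ha hb
    apply continuous_finset_sum
    intro i _
    apply Continuous.mul
    · exact (continuous_apply i).comp
        (((ha.fderiv_right (m := 0) le_rfl).continuous).clm_apply (hu.continuous))
    · exact (continuous_apply i).comp hb.continuous
  have hconvSupp : ∀ (a b : (Fin 2 → ℝ) → (Fin 2 → ℝ)), HasCompactSupport (convTerm u a b) := by
    intro a b
    apply hus.mono (f' := convTerm u a b)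
    intro x hx
    simp only [Function.mem_support, ne_eq] at hx ⊢
    intro h0
    exact hx (by simp [convTerm, h0])
  have hconvInt : ∀ (a b : (Fin 2 → ℝ) → (Fin 2 → ℝ)), ContDiff ℝ 1 a → ContDiff ℝ 1 b →
      Integrable (convTerm u a b) := fun a b ha hb =>
    (hconvCont a b ha hb).integrable_of_hasCompactSupport (hconvSupp a b)
  have hdivgCont : Continuous fun x => divg u x * (∑ i, v x i * w x i) := by
    apply Continuous.mul
    · apply continuous_finset_sum
      intro j _
      exact (continuous_apply j).comp
        (((hu.fderiv_right (m := 0) le_rfl).continuous).clm_apply continuous_const)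
    · exact hSvw.continuous
  have hdivgSupp : HasCompactSupport fun x => divg u x * (∑ i, v x i * w x i) := by
    apply hus.mono' (f' := fun x => divg u x * (∑ i, v x i * w x i))
    intro x hx
    apply support_fderiv_subset (𝕜 := ℝ) (f := u)
    simp only [Function.mem_support, ne_eq] at hx ⊢
    intro h0
    exact hx (by simp [divg, h0])
  have hdivgInt : Integrable fun x => divg u x * (∑ i, v x i * w x i) :=
    hdivgCont.integrable_of_hasCompactSupport hdivgSupp
  -- rewrite the divergence integral
  have hdiv2 : (∫ x, (convTerm u v w x + convTerm u w v x
      + divg u x * (∑ i, v x i * w x i))) = 0 := by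
    rw [← hdiv]
    congr 1
    funext x
    rw [pointwise_div_identity u v w hu hv hw x]
  have hAB : Integrable (fun x => convTerm u v w x + convTerm u w v x) volume :=
    (hconvInt v w hv hw).add (hconvInt w v hw hv)
  rw [integral_add hAB hdivgInt,
    integral_add (hconvInt v w hv hw) (hconvInt w v hw hv)] at hdiv2
  -- conclude
  have hswap : (∫ x, divg u x * (∑ i, w x i * v x i))
      = ∫ x, divg u x * (∑ i, v x i * w x i) := by
    congr 1
    funext x
    congr 1
    exact Finset.sum_congr rfl fun i _ => mul_comm _ _
  simp only [Bform, hswap]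
  linarith [hdiv2]
end

section
/- Let Ω be a bounded open subset of ℝ². There exists a constant C > 0, depending only on Ω, such that for all continuously differentiable vector fields u, v, w : ℝ² → ℝ² with compact support contained in Ω one has |B(u, v, w)| ≤ C·‖∇u‖_{L²}·‖∇v‖_{L²}·‖∇w‖_{L²}. -/
open MeasureTheory

/-- The `L²` norm of the gradient:
`‖∇u‖_{L²} = (∫ ∑_i ∑_j (∂_j u_i)² dx)^{1/2}`. -/
noncomputable def gradL2 (u : (Fin 2 → ℝ) → (Fin 2 → ℝ)) : ℝ :=
  Real.sqrt (∫ x, ∑ i, ∑ j, (fderiv ℝ u x (Pi.single j 1) i) ^ 2)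

open ENNReal NNReal

set_option linter.unusedSectionVars false
set_option linter.unusedVariables false


lemma holder3 {X : Type*} [MeasurableSpace X] (μ : Measure X) (F G H : X → ℝ≥0∞)
    (hF : AEMeasurable F μ) (hG : AEMeasurable G μ) (hH : AEMeasurable H μ) :
    ∫⁻ x, F x * G x * H x ∂μ ≤ (∫⁻ x, F x ^ (2:ℝ) ∂μ) ^ (1/2:ℝ) *
      ((∫⁻ x, G x ^ (4:ℝ) ∂μ) ^ (1/4:ℝ) * (∫⁻ x, H x ^ (4:ℝ) ∂μ) ^ (1/4:ℝ)) := by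
  have h22 : Real.HolderConjugate 2 2 := by constructor <;> norm_num
  calc ∫⁻ x, F x * G x * H x ∂μ = ∫⁻ x, F x * (G x * H x) ∂μ := by simp [mul_assoc]
    _ ≤ (∫⁻ x, F x ^ (2:ℝ) ∂μ) ^ (1/2:ℝ) * (∫⁻ x, (G x * H x) ^ (2:ℝ) ∂μ) ^ (1/2:ℝ) :=
        ENNReal.lintegral_mul_le_Lp_mul_Lq μ h22 hF (hG.mul hH)
    _ ≤ _ := by
        gcongr
        calc (∫⁻ x, (G x * H x) ^ (2:ℝ) ∂μ) ^ (1/2:ℝ)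
            = (∫⁻ x, G x ^ (2:ℝ) * H x ^ (2:ℝ) ∂μ) ^ (1/2:ℝ) := by
              congr 1; refine lintegral_congr fun x => ?_
              rw [ENNReal.mul_rpow_of_nonneg _ _ (by norm_num)]
          _ ≤ ((∫⁻ x, (G x ^ (2:ℝ)) ^ (2:ℝ) ∂μ) ^ (1/2:ℝ) *
               (∫⁻ x, (H x ^ (2:ℝ)) ^ (2:ℝ) ∂μ) ^ (1/2:ℝ)) ^ (1/2:ℝ) := by
              gcongr
              exact ENNReal.lintegral_mul_le_Lp_mul_Lq μ h22 (hG.pow_const _) (hH.pow_const _)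
          _ = _ := by
              rw [ENNReal.mul_rpow_of_nonneg _ _ (by norm_num), ← ENNReal.rpow_mul,
                ← ENNReal.rpow_mul]
              norm_num
              congr 2 <;> exact lintegral_congr fun x => by
                rw [← pow_mul]


lemma opnorm_le (L : (Fin 2 → ℝ) →L[ℝ] (Fin 2 → ℝ)) :
    ‖L‖ ≤ 2 * Real.sqrt (∑ i, ∑ j, (L (Pi.single j 1) i) ^ 2) := by
  set g := ∑ i, ∑ j, (L (Pi.single j 1) i) ^ 2 with hg
  have hg0 : 0 ≤ g := by positivity
  have hterm : ∀ j i, |L (Pi.single j 1) i| ≤ Real.sqrt g := by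
    intro j i
    rw [← Real.sqrt_sq_eq_abs]
    apply Real.sqrt_le_sqrt
    calc (L (Pi.single j 1) i)^2 ≤ ∑ j', (L (Pi.single j' 1) i) ^ 2 :=
          Finset.single_le_sum (f := fun j' => (L (Pi.single j' 1) i)^2) (fun _ _ => sq_nonneg _) (Finset.mem_univ j)
      _ ≤ g := Finset.single_le_sum (f := fun i' => ∑ j', (L (Pi.single j' 1) i') ^ 2)
          (fun _ _ => Finset.sum_nonneg fun _ _ => sq_nonneg _) (Finset.mem_univ i)
  apply ContinuousLinearMap.opNorm_le_bound _ (by positivity)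
  intro y
  have hy : y = ∑ j, y j • (Pi.single j (1:ℝ) : Fin 2 → ℝ) := by
    ext i; simp [Finset.sum_apply, Pi.single_apply, eq_comm]
  calc ‖L y‖ = ‖∑ j, y j • L (Pi.single j 1)‖ := by
        conv_lhs => rw [hy]
        rw [map_sum]; simp
    _ ≤ ∑ j, ‖y j • L (Pi.single j 1)‖ := norm_sum_le _ _
    _ ≤ ∑ j : Fin 2, ‖y‖ * Real.sqrt g := by
        apply Finset.sum_le_sum; intro j _
        rw [norm_smul]
        have h1 : ‖y j‖ ≤ ‖y‖ := norm_le_pi_norm y j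
        have h2 : ‖L (Pi.single j 1)‖ ≤ Real.sqrt g := by
          rw [pi_norm_le_iff_of_nonneg (Real.sqrt_nonneg _)]
          intro i; rw [Real.norm_eq_abs]; exact hterm j i
        exact mul_le_mul h1 h2 (norm_nonneg _) (norm_nonneg _)
    _ = 2 * Real.sqrt g * ‖y‖ := by simp [Finset.sum_const]; ring

noncomputable def Ksob (Ω : Set (Fin 2 → ℝ)) : ℝ≥0∞ :=
  (eLpNormLESNormFDerivOfLeConst (Fin 2 → ℝ) volume Ω (3/2) 4 : ℝ≥0) *
    (volume Ω) ^ (2/3 - 1/2 : ℝ)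

section
variable {u : (Fin 2 → ℝ) → (Fin 2 → ℝ)} (hu : ContDiff ℝ 1 u) (h2u : HasCompactSupport u)
include hu h2u

lemma cont_g : Continuous fun x => ∑ i, ∑ j, (fderiv ℝ u x (Pi.single j 1) i) ^ 2 := by
  have h := (hu.fderiv_right (m := 0) le_rfl).continuous
  fun_prop

lemma integrable_g :
    Integrable (fun x => ∑ i, ∑ j, (fderiv ℝ u x (Pi.single j 1) i) ^ 2) := by
  apply (cont_g hu h2u).integrable_of_hasCompactSupport
  have h3 : HasCompactSupport (fderiv ℝ u) := h2u.fderiv (𝕜 := ℝ)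
  have := h3.comp_left (g := fun L : (Fin 2 → ℝ) →L[ℝ] (Fin 2 → ℝ) =>
    ∑ i, ∑ j, (L (Pi.single j 1) i) ^ 2) (by simp)
  exact this

lemma grad_eLpNorm_le : eLpNorm (fderiv ℝ u) 2 volume ≤ ENNReal.ofReal (2 * gradL2 u) := by
  set g := fun x => ∑ i, ∑ j, (fderiv ℝ u x (Pi.single j 1) i) ^ 2 with hgdef
  have hg0 : ∀ x, 0 ≤ g x := fun x => by positivity
  have hI : 0 ≤ ∫ x, g x := integral_nonneg hg0
  rw [eLpNorm_eq_lintegral_rpow_enorm_toReal (by norm_num) (by norm_num)]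
  have hpt : ∀ x, (‖fderiv ℝ u x‖₊ : ℝ≥0∞) ^ (2:ℝ≥0∞).toReal ≤ ENNReal.ofReal (4 * g x) := by
    intro x
    rw [← enorm_eq_nnnorm, ← ofReal_norm, ENNReal.toReal_ofNat,
      ENNReal.ofReal_rpow_of_nonneg (norm_nonneg _) (by norm_num)]
    apply ENNReal.ofReal_le_ofReal
    calc ‖fderiv ℝ u x‖ ^ (2:ℝ) = ‖fderiv ℝ u x‖ ^ (2:ℕ) := by
          rw [show (2:ℝ) = ((2:ℕ):ℝ) by norm_num, Real.rpow_natCast]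
      _ ≤ (2 * Real.sqrt (g x)) ^ (2:ℕ) :=
          pow_le_pow_left₀ (norm_nonneg _) (opnorm_le _) 2
      _ = 4 * g x := by
          rw [mul_pow, Real.sq_sqrt (hg0 x)]; norm_num
  calc (∫⁻ x, (‖fderiv ℝ u x‖₊ : ℝ≥0∞) ^ (2:ℝ≥0∞).toReal) ^ (1 / (2:ℝ≥0∞).toReal)
      ≤ (∫⁻ x, ENNReal.ofReal (4 * g x)) ^ (1 / (2:ℝ≥0∞).toReal) := by
        gcongr with x; exact hpt x
    _ = (ENNReal.ofReal (∫ x, 4 * g x)) ^ (1 / (2:ℝ≥0∞).toReal) := by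
        rw [ofReal_integral_eq_lintegral_ofReal ((integrable_g hu h2u).const_mul 4)
          (Filter.Eventually.of_forall fun x => by positivity)]
    _ = ENNReal.ofReal (2 * gradL2 u) := by
        rw [ENNReal.ofReal_rpow_of_nonneg (by positivity) (by norm_num)]
        congr 1
        rw [integral_const_mul, ENNReal.toReal_ofNat, ← Real.sqrt_eq_rpow,
          Real.sqrt_mul (by norm_num : (0:ℝ) ≤ 4),
          show Real.sqrt 4 = 2 by rw [show (4:ℝ) = 2^2 by norm_num, Real.sqrt_sq (by norm_num)]]
        rfl
end

lemma Ksob_ne_top {Ω : Set (Fin 2 → ℝ)} (hΩb : Bornology.IsBounded Ω) : Ksob Ω ≠ ∞ := by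
  have : volume Ω < ∞ := hΩb.measure_lt_top
  refine ENNReal.mul_ne_top coe_ne_top ?_
  exact (ENNReal.rpow_lt_top_of_nonneg (by norm_num) this.ne).ne

lemma L4_bound {Ω : Set (Fin 2 → ℝ)} (hΩb : Bornology.IsBounded Ω)
    {u : (Fin 2 → ℝ) → (Fin 2 → ℝ)} (hu : ContDiff ℝ 1 u) (hsupp : tsupport u ⊆ Ω) :
    eLpNorm u 4 volume ≤ Ksob Ω * eLpNorm (fderiv ℝ u) 2 volume := by
  have hsupp' : Function.support u ⊆ Ω := subset_tsupport u |>.trans hsupp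
  have h1 : eLpNorm u (4 : ℝ≥0) volume ≤
      (eLpNormLESNormFDerivOfLeConst (Fin 2 → ℝ) volume Ω (3/2) 4 : ℝ≥0) *
      eLpNorm (fderiv ℝ u) ((3/2 : ℝ≥0)) volume := by
    refine eLpNorm_le_eLpNorm_fderiv_of_le volume hu hsupp' ?_ ?_ ?_ hΩb
    · rw [← NNReal.coe_le_coe]; push_cast; norm_num
    · rw [show Module.finrank ℝ (Fin 2 → ℝ) = 2 by simp, ← NNReal.coe_lt_coe]
      push_cast; norm_num
    · rw [show Module.finrank ℝ (Fin 2 → ℝ) = 2 by simp]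
      push_cast; norm_num
  have hDsupp : Function.support (fderiv ℝ u) ⊆ Ω := (support_fderiv_subset ℝ).trans hsupp
  have h2 : eLpNorm (fderiv ℝ u) ((3/2 : ℝ≥0)) volume ≤
      eLpNorm (fderiv ℝ u) 2 volume * (volume Ω) ^ (2/3 - 1/2 : ℝ) := by
    have hD : Continuous (fderiv ℝ u) := (hu.fderiv_right (m := 0) le_rfl).continuous
    calc eLpNorm (fderiv ℝ u) ((3/2 : ℝ≥0)) volume
        = eLpNorm (fderiv ℝ u) ((3/2 : ℝ≥0)) (volume.restrict Ω) :=
          (eLpNorm_restrict_eq_of_support_subset (ε := (Fin 2 → ℝ) →L[ℝ] (Fin 2 → ℝ)) hDsupp).symm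
      _ ≤ eLpNorm (fderiv ℝ u) 2 (volume.restrict Ω) *
            (volume.restrict Ω) Set.univ ^ (1 / ((3/2 : ℝ≥0) : ℝ≥0∞).toReal - 1 / (2 : ℝ≥0∞).toReal) := by
          refine eLpNorm_le_eLpNorm_mul_rpow_measure_univ ?_ hD.aestronglyMeasurable.restrict
          rw [show ((2:ℝ≥0∞)) = ((2:ℝ≥0) : ℝ≥0∞) by norm_num, ENNReal.coe_le_coe,
            ← NNReal.coe_le_coe]
          push_cast; norm_num
      _ = eLpNorm (fderiv ℝ u) 2 volume * (volume Ω) ^ (2/3 - 1/2 : ℝ) := by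
          rw [eLpNorm_restrict_eq_of_support_subset (ε := (Fin 2 → ℝ) →L[ℝ] (Fin 2 → ℝ)) hDsupp, Measure.restrict_apply_univ]
          norm_num
  calc eLpNorm u 4 volume = eLpNorm u (4 : ℝ≥0) volume := by norm_num
    _ ≤ _ := h1
    _ ≤ (eLpNormLESNormFDerivOfLeConst (Fin 2 → ℝ) volume Ω (3/2) 4 : ℝ≥0) *
        (eLpNorm (fderiv ℝ u) 2 volume * (volume Ω) ^ (2/3 - 1/2 : ℝ)) := by gcongr
    _ = Ksob Ω * eLpNorm (fderiv ℝ u) 2 volume := by rw [Ksob]; ring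

lemma gradL2_nonneg (u : (Fin 2 → ℝ) → (Fin 2 → ℝ)) : 0 ≤ gradL2 u := Real.sqrt_nonneg _

lemma main_est {Ω : Set (Fin 2 → ℝ)} (hΩb : Bornology.IsBounded Ω)
    {f g h : (Fin 2 → ℝ) → (Fin 2 → ℝ)}
    (hf : ContDiff ℝ 1 f) (h2f : HasCompactSupport f)
    (hg : ContDiff ℝ 1 g) (h2g : HasCompactSupport g) (hsg : tsupport g ⊆ Ω)
    (hh : ContDiff ℝ 1 h) (h2h : HasCompactSupport h) (hsh : tsupport h ⊆ Ω) :
    ∫ x, ‖fderiv ℝ f x‖ * ‖g x‖ * ‖h x‖ ≤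
      (2 * gradL2 f) * ((Ksob Ω).toReal * (2 * gradL2 g)) *
        ((Ksob Ω).toReal * (2 * gradL2 h)) := by
  have hK := Ksob_ne_top hΩb
  have hDf : Continuous (fderiv ℝ f) := (hf.fderiv_right (m := 0) le_rfl).continuous
  set B : ℝ≥0∞ := ENNReal.ofReal (2 * gradL2 f) * ((Ksob Ω * ENNReal.ofReal (2 * gradL2 g)) *
    (Ksob Ω * ENNReal.ofReal (2 * gradL2 h))) with hB
  have hBne : B ≠ ∞ := by
    rw [hB]
    refine ENNReal.mul_ne_top ofReal_ne_top (ENNReal.mul_ne_top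
      (ENNReal.mul_ne_top hK ofReal_ne_top) (ENNReal.mul_ne_top hK ofReal_ne_top))
  have key : ∫⁻ x, (‖fderiv ℝ f x‖₊ : ℝ≥0∞) * ‖g x‖₊ * ‖h x‖₊ ≤ B := by
    calc ∫⁻ x, (‖fderiv ℝ f x‖₊ : ℝ≥0∞) * ‖g x‖₊ * ‖h x‖₊
        ≤ (∫⁻ x, (‖fderiv ℝ f x‖₊ : ℝ≥0∞) ^ (2:ℝ)) ^ (1/2:ℝ) *
          ((∫⁻ x, (‖g x‖₊ : ℝ≥0∞) ^ (4:ℝ)) ^ (1/4:ℝ) *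
           (∫⁻ x, (‖h x‖₊ : ℝ≥0∞) ^ (4:ℝ)) ^ (1/4:ℝ)) := by
          apply holder3 <;>
            first
            | exact (hDf.measurable.nnnorm.coe_nnreal_ennreal).aemeasurable
            | exact (hg.continuous.measurable.nnnorm.coe_nnreal_ennreal).aemeasurable
            | exact (hh.continuous.measurable.nnnorm.coe_nnreal_ennreal).aemeasurable
      _ = eLpNorm (fderiv ℝ f) 2 volume * (eLpNorm g 4 volume * eLpNorm h 4 volume) := by
          rw [eLpNorm_eq_lintegral_rpow_enorm_toReal (by norm_num) (by norm_num),
            eLpNorm_eq_lintegral_rpow_enorm_toReal (p := 4) (by norm_num) (by norm_num),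
            eLpNorm_eq_lintegral_rpow_enorm_toReal (p := 4) (by norm_num) (by norm_num)]
          norm_num
          rfl
      _ ≤ ENNReal.ofReal (2 * gradL2 f) * ((Ksob Ω * eLpNorm (fderiv ℝ g) 2 volume) *
            (Ksob Ω * eLpNorm (fderiv ℝ h) 2 volume)) := by
          gcongr
          exacts [grad_eLpNorm_le hf h2f, L4_bound hΩb hg hsg, L4_bound hΩb hh hsh]
      _ ≤ B := by
          rw [hB]; gcongr
          exacts [grad_eLpNorm_le hg h2g, grad_eLpNorm_le hh h2h]
  have hnn : ∀ x, (0:ℝ) ≤ ‖fderiv ℝ f x‖ * ‖g x‖ * ‖h x‖ := fun x => by positivity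
  calc ∫ x, ‖fderiv ℝ f x‖ * ‖g x‖ * ‖h x‖
      = (∫⁻ x, ENNReal.ofReal (‖fderiv ℝ f x‖ * ‖g x‖ * ‖h x‖)).toReal := by
        rw [integral_eq_lintegral_of_nonneg_ae (Filter.Eventually.of_forall hnn)]
        exact ((hDf.norm.mul hg.continuous.norm).mul hh.continuous.norm).aestronglyMeasurable
    _ = (∫⁻ x, (‖fderiv ℝ f x‖₊ : ℝ≥0∞) * ‖g x‖₊ * ‖h x‖₊).toReal := by
        congr 1
        refine lintegral_congr fun x => ?_
        rw [ENNReal.ofReal_mul (by positivity), ENNReal.ofReal_mul (by positivity),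
          ofReal_norm, ofReal_norm, ofReal_norm]
        rfl
    _ ≤ B.toReal := ENNReal.toReal_mono hBne key
    _ = (2 * gradL2 f) * ((Ksob Ω).toReal * (2 * gradL2 g)) *
          ((Ksob Ω).toReal * (2 * gradL2 h)) := by
        rw [hB, ENNReal.toReal_mul, ENNReal.toReal_mul, ENNReal.toReal_mul, ENNReal.toReal_mul,
          ENNReal.toReal_ofReal (by have := gradL2_nonneg f; linarith),
          ENNReal.toReal_ofReal (by have := gradL2_nonneg g; linarith),
          ENNReal.toReal_ofReal (by have := gradL2_nonneg h; linarith)]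
        ring

section ptwise
variable (u v w : (Fin 2 → ℝ) → (Fin 2 → ℝ)) (x : Fin 2 → ℝ)

lemma conv_ptwise : |convTerm u v w x| ≤ 2 * (‖fderiv ℝ v x‖ * ‖u x‖ * ‖w x‖) := by
  calc |convTerm u v w x| ≤ ∑ i, |fderiv ℝ v x (u x) i * w x i| :=
        Finset.abs_sum_le_sum_abs _ _
    _ ≤ ∑ _i : Fin 2, (‖fderiv ℝ v x‖ * ‖u x‖) * ‖w x‖ := by
        apply Finset.sum_le_sum; intro i _
        rw [abs_mul]
        have h1 : |fderiv ℝ v x (u x) i| ≤ ‖fderiv ℝ v x (u x)‖ := by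
          rw [← Real.norm_eq_abs]; exact norm_le_pi_norm _ i
        have h2 : ‖fderiv ℝ v x (u x)‖ ≤ ‖fderiv ℝ v x‖ * ‖u x‖ :=
          (fderiv ℝ v x).le_opNorm _
        have h3 : |w x i| ≤ ‖w x‖ := by rw [← Real.norm_eq_abs]; exact norm_le_pi_norm _ i
        exact mul_le_mul (h1.trans h2) h3 (abs_nonneg _) (by positivity)
    _ = 2 * (‖fderiv ℝ v x‖ * ‖u x‖ * ‖w x‖) := by
        simp [Finset.sum_const]; try ring

lemma div_ptwise : |divg u x * (∑ i, v x i * w x i)| ≤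
    4 * (‖fderiv ℝ u x‖ * ‖v x‖ * ‖w x‖) := by
  rw [abs_mul]
  have h1 : |divg u x| ≤ 2 * ‖fderiv ℝ u x‖ := by
    calc |divg u x| ≤ ∑ j, |fderiv ℝ u x (Pi.single j 1) j| := Finset.abs_sum_le_sum_abs _ _
      _ ≤ ∑ _j : Fin 2, ‖fderiv ℝ u x‖ := by
          apply Finset.sum_le_sum; intro j _
          have h1 : |fderiv ℝ u x (Pi.single j 1) j| ≤ ‖fderiv ℝ u x (Pi.single j 1)‖ := by
            rw [← Real.norm_eq_abs]; exact norm_le_pi_norm _ j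
          refine h1.trans ?_
          calc ‖fderiv ℝ u x (Pi.single j 1)‖ ≤ ‖fderiv ℝ u x‖ * ‖(Pi.single j 1 : Fin 2 → ℝ)‖ :=
                (fderiv ℝ u x).le_opNorm _
            _ ≤ ‖fderiv ℝ u x‖ * 1 := by
                gcongr
                rw [pi_norm_le_iff_of_nonneg zero_le_one]
                intro i; rw [Pi.single_apply]
                split <;> simp
            _ = ‖fderiv ℝ u x‖ := mul_one _
      _ = 2 * ‖fderiv ℝ u x‖ := by simp [Finset.sum_const]; try ring
  have h2 : |∑ i, v x i * w x i| ≤ 2 * (‖v x‖ * ‖w x‖) := by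
    calc |∑ i, v x i * w x i| ≤ ∑ i, |v x i * w x i| := Finset.abs_sum_le_sum_abs _ _
      _ ≤ ∑ _i : Fin 2, ‖v x‖ * ‖w x‖ := by
          apply Finset.sum_le_sum; intro i _
          rw [abs_mul]
          exact mul_le_mul (by rw [← Real.norm_eq_abs]; exact norm_le_pi_norm _ i)
            (by rw [← Real.norm_eq_abs]; exact norm_le_pi_norm _ i) (abs_nonneg _) (norm_nonneg _)
      _ = 2 * (‖v x‖ * ‖w x‖) := by simp [Finset.sum_const]; try ring
  calc |divg u x| * |∑ i, v x i * w x i| ≤ (2 * ‖fderiv ℝ u x‖) * (2 * (‖v x‖ * ‖w x‖)) :=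
        mul_le_mul h1 h2 (abs_nonneg _) (by positivity)
    _ = 4 * (‖fderiv ℝ u x‖ * ‖v x‖ * ‖w x‖) := by ring
end ptwise

section integ
variable {u v w : (Fin 2 → ℝ) → (Fin 2 → ℝ)}
  (hu : ContDiff ℝ 1 u) (h2u : HasCompactSupport u)
  (hv : ContDiff ℝ 1 v) (h2v : HasCompactSupport v)
  (hw : ContDiff ℝ 1 w) (h2w : HasCompactSupport w)
include hu h2u hv h2v hw h2w

lemma integ_maj : Integrable (fun x => ‖fderiv ℝ v x‖ * ‖u x‖ * ‖w x‖) := by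
  have hDv : Continuous (fderiv ℝ v) := (hv.fderiv_right (m := 0) le_rfl).continuous
  apply Continuous.integrable_of_hasCompactSupport
  · exact (hDv.norm.mul hu.continuous.norm).mul hw.continuous.norm
  · apply HasCompactSupport.of_support_subset_isCompact h2u
    intro x hx
    have hux : u x ≠ 0 := by intro h0; apply hx; simp [h0]
    exact subset_tsupport u hux

lemma integ_conv : Integrable (convTerm u v w) := by
  have hDv : Continuous (fderiv ℝ v) := (hv.fderiv_right (m := 0) le_rfl).continuous
  apply Continuous.integrable_of_hasCompactSupport
  · apply continuous_finset_sum; intro i _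
    exact ((continuous_apply i).comp (hDv.clm_apply hu.continuous)).mul
      ((continuous_apply i).comp hw.continuous)
  · apply HasCompactSupport.of_support_subset_isCompact h2w
    intro x hx
    have hwx : w x ≠ 0 := by intro h0; apply hx; simp [convTerm, h0]
    exact subset_tsupport w hwx

lemma integ_div : Integrable (fun x => divg u x * (∑ i, v x i * w x i)) := by
  have hDu : Continuous (fderiv ℝ u) := (hu.fderiv_right (m := 0) le_rfl).continuous
  apply Continuous.integrable_of_hasCompactSupport
  · apply Continuous.mul
    · apply continuous_finset_sum; intro j _
      exact (continuous_apply j).comp (hDu.clm_apply continuous_const)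
    · apply continuous_finset_sum; intro i _
      exact ((continuous_apply i).comp hv.continuous).mul ((continuous_apply i).comp hw.continuous)
  · apply HasCompactSupport.of_support_subset_isCompact h2w
    intro x hx
    have hwx : w x ≠ 0 := by intro h0; apply hx; simp [h0]
    exact subset_tsupport w hwx
end integ

/-- Continuity bound (2.15) for the velocity transport form:
`|B(u, v, w)| ≤ C ‖∇u‖_{L²} ‖∇v‖_{L²} ‖∇w‖_{L²}` with `C` depending only on `Ω`. -/
theorem Bform_continuity_bound
    (Ω : Set (Fin 2 → ℝ)) (hΩo : IsOpen Ω) (hΩb : Bornology.IsBounded Ω) :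
    ∃ C > 0, ∀ u v w : (Fin 2 → ℝ) → (Fin 2 → ℝ),
      ContDiff ℝ 1 u → HasCompactSupport u → tsupport u ⊆ Ω →
      ContDiff ℝ 1 v → HasCompactSupport v → tsupport v ⊆ Ω →
      ContDiff ℝ 1 w → HasCompactSupport w → tsupport w ⊆ Ω →
      |Bform u v w| ≤ C * gradL2 u * gradL2 v * gradL2 w := by
  set K := (Ksob Ω).toReal with hK
  have hK0 : 0 ≤ K := ENNReal.toReal_nonneg
  refine ⟨32 * K^2 + 1, by positivity, ?_⟩
  intro u v w hu h2u hsu hv h2v hsv hw h2w hsw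
  have g0u := gradL2_nonneg u
  have g0v := gradL2_nonneg v
  have g0w := gradL2_nonneg w
  have t1 : |∫ x, convTerm u v w x| ≤ 16 * K^2 * (gradL2 u * gradL2 v * gradL2 w) := by
    calc |∫ x, convTerm u v w x| ≤ ∫ x, |convTerm u v w x| :=
          by
          simpa only [Real.norm_eq_abs] using
            norm_integral_le_integral_norm (convTerm u v w)
      _ ≤ ∫ x, 2 * (‖fderiv ℝ v x‖ * ‖u x‖ * ‖w x‖) := by
          apply integral_mono (integ_conv hu h2u hv h2v hw h2w).abs
            ((integ_maj hu h2u hv h2v hw h2w).const_mul 2)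
          intro x; exact conv_ptwise u v w x
      _ = 2 * ∫ x, ‖fderiv ℝ v x‖ * ‖u x‖ * ‖w x‖ := integral_const_mul 2 _
      _ ≤ 2 * ((2 * gradL2 v) * (K * (2 * gradL2 u)) * (K * (2 * gradL2 w))) := by
          have := main_est hΩb hv h2v hu h2u hsu hw h2w hsw
          linarith
      _ = 16 * K^2 * (gradL2 u * gradL2 v * gradL2 w) := by ring
  have t2 : |∫ x, divg u x * (∑ i, v x i * w x i)| ≤
      32 * K^2 * (gradL2 u * gradL2 v * gradL2 w) := by
    calc |∫ x, divg u x * (∑ i, v x i * w x i)| ≤ ∫ x, |divg u x * (∑ i, v x i * w x i)| :=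
          by
          simpa only [Real.norm_eq_abs] using
            norm_integral_le_integral_norm fun x => divg u x * (∑ i, v x i * w x i)
      _ ≤ ∫ x, 4 * (‖fderiv ℝ u x‖ * ‖v x‖ * ‖w x‖) := by
          apply integral_mono (integ_div hu h2u hv h2v hw h2w).abs
            ((integ_maj hv h2v hu h2u hw h2w).const_mul 4)
          intro x; exact div_ptwise u v w x
      _ = 4 * ∫ x, ‖fderiv ℝ u x‖ * ‖v x‖ * ‖w x‖ := integral_const_mul 4 _
      _ ≤ 4 * ((2 * gradL2 u) * (K * (2 * gradL2 v)) * (K * (2 * gradL2 w))) := by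
          have := main_est hΩb hu h2u hv h2v hsv hw h2w hsw
          linarith
      _ = 32 * K^2 * (gradL2 u * gradL2 v * gradL2 w) := by ring
  have habs : |Bform u v w| ≤ |∫ x, convTerm u v w x| +
      (1/2) * |∫ x, divg u x * (∑ i, v x i * w x i)| := by
    rw [Bform]
    refine (abs_add_le _ _).trans ?_
    rw [abs_mul, show |(1/2:ℝ)| = 1/2 by norm_num]
  have hprod : 0 ≤ gradL2 u * gradL2 v * gradL2 w := by positivity
  calc |Bform u v w| ≤ _ := habs
    _ ≤ 16 * K^2 * (gradL2 u * gradL2 v * gradL2 w) +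
        (1/2) * (32 * K^2 * (gradL2 u * gradL2 v * gradL2 w)) := by
        gcongr
    _ = 32 * K^2 * (gradL2 u * gradL2 v * gradL2 w) := by ring
    _ ≤ (32 * K^2 + 1) * (gradL2 u * gradL2 v * gradL2 w) := by nlinarith
    _ = (32 * K^2 + 1) * gradL2 u * gradL2 v * gradL2 w := by ring
end
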